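/- arXiv:2510.09429 — 2 statements merged into one kernel-verified Lean document; each statement's English description precedes it below -/
import Mathlib

section
/- Let J be a maximal tubing of C_n. For every vertex x, cut_J(J↓(x)) equals the smallest tube of Cut(J) containing x; that is, the Cut map sends the downset of x in the G-tree of J to the downset of x in the G-tree of Cut(J). -/
open Finset

section TubingDefs

variable {n : ℕ}

/-- A tube of a graph: a nonempty vertex subset inducing a connected subgraph. -/
def IsTube (G : SimpleGraph (Fin n)) (X : Finset (Fin n)) : Prop :=
  X.Nonempty ∧ (G.induce (X : Set (Fin n))).Connected

/-- Tubes are compatible if nested or with disconnected union. -/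
def TubeCompatible (G : SimpleGraph (Fin n)) (X Y : Finset (Fin n)) : Prop :=
  X ⊆ Y ∨ Y ⊆ X ∨ ¬ IsTube G (X ∪ Y)

def IsTubing (G : SimpleGraph (Fin n)) (T : Finset (Finset (Fin n))) : Prop :=
  (∀ X ∈ T, IsTube G X) ∧ ∀ X ∈ T, ∀ Y ∈ T, TubeCompatible G X Y

def IsMaxTubing (G : SimpleGraph (Fin n)) (T : Finset (Finset (Fin n))) : Prop :=
  IsTubing G T ∧ ∀ T', IsTubing G T' → T ⊆ T' → T' = T

/-- The smallest tube of `T` containing `x`: the intersection of all tubes of `T`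
containing `x`. -/
def tubingDown (T : Finset (Finset (Fin n))) (x : Fin n) : Finset (Fin n) :=
  Finset.univ.filter (fun y => ∀ X ∈ T, x ∈ X → y ∈ X)

/-- The G-tree order of a tubing: `x ≤_T y` iff `x` lies in the smallest tube containing `y`. -/
def treeLE (T : Finset (Finset (Fin n))) (x y : Fin n) : Prop :=
  x ∈ tubingDown T y

/-- `y` covers `x` in the G-tree order of `T`. -/
def TreeCovBy (T : Finset (Finset (Fin n))) (x y : Fin n) : Prop :=
  treeLE T x y ∧ x ≠ y ∧ ∀ z, treeLE T x z → treeLE T z y → z = x ∨ z = y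

/-- Flip cover relation on maximal tubings: exchange exactly one tube, with the
top (least-nested) element of the exchanged tube increasing. -/
def FlipCover (G : SimpleGraph (Fin n)) (T J : Finset (Finset (Fin n))) : Prop :=
  IsMaxTubing G T ∧ IsMaxTubing G J ∧
  ∃ X Y, X ∈ T ∧ Y ∈ J ∧ X ≠ Y ∧ T.erase X = J.erase Y ∧
    ∃ x y : Fin n, tubingDown T x = X ∧ tubingDown J y = Y ∧ x < y

/-- The order of the poset of maximal tubings, generated by flip covers. -/
def MTubLE (G : SimpleGraph (Fin n)) :
    Finset (Finset (Fin n)) → Finset (Finset (Fin n)) → Prop :=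
  Relation.ReflTransGen (FlipCover G)

/-- Inversions: pairs `i < j` with `j <_T i` in the G-tree. -/
def invSet (T : Finset (Finset (Fin n))) : Set (Fin n × Fin n) :=
  {p | p.1 < p.2 ∧ treeLE T p.2 p.1}

/-- Coinversions: pairs `i < j` with `i <_T j` in the G-tree. -/
def coinvSet (T : Finset (Finset (Fin n))) : Set (Fin n × Fin n) :=
  {p | p.1 < p.2 ∧ treeLE T p.1 p.2}

/-- Incomparable pairs `i < j` of the G-tree. -/
def incSet (T : Finset (Finset (Fin n))) : Set (Fin n × Fin n) :=
  {p | p.1 < p.2 ∧ ¬ treeLE T p.1 p.2 ∧ ¬ treeLE T p.2 p.1}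

/-- The cut of the tube `J↓(x)`, where `m` is the root of the G-tree of `J`. -/
def cutTube (J : Finset (Finset (Fin n))) (m x : Fin n) : Finset (Fin n) :=
  if x = m then tubingDown J x
  else if x < m then (tubingDown J x).filter (fun y => y < m)
  else (tubingDown J x).filter (fun y => m < y)

/-- The Cut map on maximal tubings of the cycle. -/
def CutTubing (J : Finset (Finset (Fin n))) (m : Fin n) : Finset (Finset (Fin n)) :=
  Finset.image (cutTube J m) Finset.univ

/-- Inversions of a word: pairs `i < j` such that `j` appears before `i`. -/
def listInvSet (w : List (Fin n)) : Set (Fin n × Fin n) :=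
  {p | p.1 < p.2 ∧ p.1 ∈ w ∧ p.2 ∈ w ∧ w.idxOf p.2 < w.idxOf p.1}

end TubingDefs

/-- The path graph `1 - 2 - ⋯ - n`. -/
def pathGraph (n : ℕ) : SimpleGraph (Fin n) :=
  SimpleGraph.fromRel (fun a b => (a : ℕ) + 1 = (b : ℕ))

/-- The cycle graph `1 - 2 - ⋯ - n - 1`. -/
def cycleGraph (n : ℕ) : SimpleGraph (Fin n) :=
  SimpleGraph.fromRel (fun a b => (a : ℕ) + 1 = (b : ℕ) ∨ ((a : ℕ) = 0 ∧ (b : ℕ) = n - 1))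

/-- The Cut map takes downsets to downsets: `cut_J(J↓(x)) = Cut(J)↓(x)`. -/
theorem cut_downsets (n : ℕ) (J : Finset (Finset (Fin n))) (m : Fin n)
    (hJ : IsMaxTubing (cycleGraph n) J) (hm : tubingDown J m = Finset.univ) :
    ∀ x : Fin n, cutTube J m x = tubingDown (CutTubing J m) x := by
  intro x
  have hrefl : ∀ w : Fin n, w ∈ tubingDown J w := by
    intro w
    simp only [tubingDown, Finset.mem_filter, Finset.mem_univ, true_and]
    intro X _ h; exact h
  have htrans : ∀ a b c : Fin n, a ∈ tubingDown J b → b ∈ tubingDown J c →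
      a ∈ tubingDown J c := by
    intro a b c ha hb
    simp only [tubingDown, Finset.mem_filter, Finset.mem_univ, true_and] at *
    intro X hX hcX
    exact ha X hX (hb X hX hcX)
  have hself : ∀ w : Fin n, w ∈ cutTube J m w := by
    intro w
    unfold cutTube
    split_ifs with h1 h2
    · exact hrefl w
    · exact Finset.mem_filter.mpr ⟨hrefl w, h2⟩
    · exact Finset.mem_filter.mpr ⟨hrefl w, lt_of_le_of_ne (not_lt.mp h2) (Ne.symm h1)⟩
  apply Finset.Subset.antisymm
  · intro y hy
    simp only [tubingDown, Finset.mem_filter, Finset.mem_univ, true_and]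
    intro X hX hxX
    simp only [CutTubing, Finset.mem_image, Finset.mem_univ, true_and] at hX
    obtain ⟨z, rfl⟩ := hX
    unfold cutTube at hxX ⊢
    split_ifs at hxX ⊢ with h1 h2
    · subst h1; rw [hm]; exact Finset.mem_univ y
    · obtain ⟨hxz, hxm⟩ := Finset.mem_filter.mp hxX
      have hxne : x ≠ m := ne_of_lt hxm
      rw [cutTube, if_neg hxne, if_pos hxm] at hy
      obtain ⟨hyx, hym⟩ := Finset.mem_filter.mp hy
      exact Finset.mem_filter.mpr ⟨htrans y x z hyx hxz, hym⟩
    · obtain ⟨hxz, hmx⟩ := Finset.mem_filter.mp hxX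
      have hxne : x ≠ m := (ne_of_lt hmx).symm
      rw [cutTube, if_neg hxne, if_neg (not_lt.mpr (le_of_lt hmx))] at hy
      obtain ⟨hyx, hmy⟩ := Finset.mem_filter.mp hy
      exact Finset.mem_filter.mpr ⟨htrans y x z hyx hxz, hmy⟩
  · intro y hy
    simp only [tubingDown, Finset.mem_filter, Finset.mem_univ, true_and] at hy
    exact hy (cutTube J m x) (Finset.mem_image_of_mem _ (Finset.mem_univ x)) (hself x)
end

section
/- Every maximal tubing J of C_n has at least as many descents in its G-tree as there are right edges (edges to right children) in its G-tree. Consequently, any G-tree has at least as many descents as branching points, and the G-tree of a join irreducible element of MTub(C_n) has at most one branching point. -/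
open Finset

open scoped Classical

/-- Position of `a` in the cyclic order `<_m` (0-indexed vertices). -/
def cycPos (n : ℕ) (m a : Fin n) : ℕ := ((a : ℕ) + n - (m : ℕ) - 1) % n


namespace CT

open Finset

variable {n : ℕ}

lemma posm_lt (m v : Fin n) : cycPos n m v < n := Nat.mod_lt _ m.pos

lemma posm_gt {m v : Fin n} (h : (m:ℕ) < v) : cycPos n m v = (v:ℕ) - m - 1 := by
  have hv := v.is_lt
  unfold cycPos
  rw [(by omega : (v:ℕ) + n - (m:ℕ) - 1 = n + ((v:ℕ) - m - 1)), Nat.add_mod_left,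
    Nat.mod_eq_of_lt (by omega)]

lemma posm_le {m v : Fin n} (h : (v:ℕ) ≤ m) : cycPos n m v = (v:ℕ) + n - m - 1 := by
  have hm := m.is_lt
  unfold cycPos
  exact Nat.mod_eq_of_lt (by omega)

lemma posm_self (m : Fin n) : cycPos n m m = n - 1 := by
  have hm := m.is_lt
  rw [posm_le (le_refl _)]
  omega

lemma posm_inj {m v w : Fin n} (h : cycPos n m v = cycPos n m w) : v = w := by
  have hm := m.is_lt; have hv := v.is_lt; have hw := w.is_lt
  apply Fin.ext
  by_cases h1 : (m:ℕ) < v <;> by_cases h2 : (m:ℕ) < w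
  · rw [posm_gt h1, posm_gt h2] at h; omega
  · rw [posm_gt h1, posm_le (v := w) (by omega)] at h; omega
  · rw [posm_le (v := v) (by omega), posm_gt h2] at h; omega
  · rw [posm_le (v := v) (by omega), posm_le (v := w) (by omega)] at h; omega

lemma posm_ne {m v : Fin n} (hv : v ≠ m) : cycPos n m v < n - 1 := by
  have hm := m.is_lt; have hv' := v.is_lt
  have : (v:ℕ) ≠ m := fun e => hv (Fin.ext e)
  by_cases h : (m:ℕ) < v
  · rw [posm_gt h]; omega
  · rw [posm_le (by omega)]; omega

def vtx (m : Fin n) (q : ℕ) : Fin n := ⟨((m:ℕ) + 1 + q) % n, Nat.mod_lt _ m.pos⟩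

lemma vtx_posm (m v : Fin n) : vtx m (cycPos n m v) = v := by
  have hm := m.is_lt; have hv := v.is_lt
  apply Fin.ext
  show ((m:ℕ) + 1 + ((v:ℕ) + n - m - 1) % n) % n = v
  rw [Nat.add_mod_mod, (by omega : (m:ℕ) + 1 + ((v:ℕ) + n - (m:ℕ) - 1) = (v:ℕ) + n),
    Nat.add_mod_right, Nat.mod_eq_of_lt hv]

lemma posm_vtx (m : Fin n) {q : ℕ} (hq : q < n) : cycPos n m (vtx m q) = q := by
  have hm := m.is_lt
  show ((((m:ℕ) + 1 + q) % n) + n - m - 1) % n = q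
  rw [(by omega : (((m:ℕ) + 1 + q) % n) + n - m - 1 = (((m:ℕ) + 1 + q) % n) + (n - m - 1)),
    Nat.mod_add_mod, (by omega : (m:ℕ) + 1 + q + (n - (m:ℕ) - 1) = q + n),
    Nat.add_mod_right, Nat.mod_eq_of_lt hq]

lemma cyc_adj' {a b : Fin n} : (cycleGraph n).Adj a b ↔ a ≠ b ∧
    ((b:ℕ) = (a:ℕ)+1 ∨ (a:ℕ) = (b:ℕ)+1 ∨ ((a:ℕ) = 0 ∧ (b:ℕ) = n-1) ∨ ((b:ℕ) = 0 ∧ (a:ℕ) = n-1)) := by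
  unfold cycleGraph
  rw [SimpleGraph.fromRel_adj]
  constructor
  · rintro ⟨h1, h2⟩; exact ⟨h1, by omega⟩
  · rintro ⟨h1, h2⟩; exact ⟨h1, by omega⟩

lemma step_adj {m a b : Fin n} (h : (cycleGraph n).Adj a b) (ha : a ≠ m) (hb : b ≠ m) :
    cycPos n m b = cycPos n m a + 1 ∨ cycPos n m a = cycPos n m b + 1 := by
  have hm := m.is_lt; have hav := a.is_lt; have hbv := b.is_lt
  have ha' : (a:ℕ) ≠ m := fun e => ha (Fin.ext e)
  have hb' : (b:ℕ) ≠ m := fun e => hb (Fin.ext e)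
  rcases cyc_adj'.1 h with ⟨hne, hc⟩
  have hne' : (a:ℕ) ≠ b := fun e => hne (Fin.ext e)
  by_cases h1 : (m:ℕ) < a <;> by_cases h2 : (m:ℕ) < b
  · rw [posm_gt h1, posm_gt h2]; omega
  · rw [posm_gt h1, posm_le (v := b) (by omega)]; omega
  · rw [posm_le (v := a) (by omega), posm_gt h2]; omega
  · rw [posm_le (v := a) (by omega), posm_le (v := b) (by omega)]; omega

lemma adj_step {m a b : Fin n} (h : cycPos n m b = cycPos n m a + 1) : (cycleGraph n).Adj a b := by
  have hm := m.is_lt; have hav := a.is_lt; have hbv := b.is_lt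
  apply cyc_adj'.2
  refine ⟨fun e => by rw [e] at h; omega, ?_⟩
  by_cases h1 : (m:ℕ) < a <;> by_cases h2 : (m:ℕ) < b
  · rw [posm_gt h1, posm_gt h2] at h; omega
  · rw [posm_gt h1, posm_le (v := b) (by omega)] at h; omega
  · rw [posm_le (v := a) (by omega), posm_gt h2] at h; omega
  · rw [posm_le (v := a) (by omega), posm_le (v := b) (by omega)] at h; omega

/-- `S` is an interval in the linear order obtained by cutting the cycle at `m`. -/
def ItvAt (m : Fin n) (S : Finset (Fin n)) : Prop :=
  m ∉ S ∧ ∀ a ∈ S, ∀ b ∈ S, ∀ z : Fin n,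
    cycPos n m a ≤ cycPos n m z → cycPos n m z ≤ cycPos n m b → z ∈ S

lemma walk_hits {m a b : Fin n} (w : (cycleGraph n).Walk a b) (hm : m ∉ w.support) {q : ℕ}
    (h1 : cycPos n m a ≤ q) (h2 : q ≤ cycPos n m b) : ∃ v ∈ w.support, cycPos n m v = q := by
  induction w with
  | nil => exact ⟨_, SimpleGraph.Walk.start_mem_support _, by omega⟩
  | @cons u x b hadj w ih =>
    rw [SimpleGraph.Walk.support_cons, List.mem_cons] at hm
    push_neg at hm
    by_cases hq : cycPos n m u = q
    · exact ⟨u, by simp, hq⟩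
    · have hu : u ≠ m := fun e => hm.1 e.symm
      have hx : x ≠ m := fun e => hm.2 (e ▸ w.start_mem_support)
      have h1' : cycPos n m u < q := lt_of_le_of_ne h1 hq
      rcases step_adj (m := m) hadj hu hx with hs | hs
      · obtain ⟨v, hv, hvq⟩ := ih hm.2 (by omega) h2
        exact ⟨v, by simp [hv], hvq⟩
      · obtain ⟨v, hv, hvq⟩ := ih hm.2 (by omega) h2
        exact ⟨v, by simp [hv], hvq⟩

lemma tube_itvAt {S : Finset (Fin n)} (hS : IsTube (cycleGraph n) S) {m : Fin n} (hm : m ∉ S) :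
    ItvAt m S := by
  refine ⟨hm, ?_⟩
  intro a ha b hb z h1 h2
  obtain ⟨w0⟩ := hS.2.preconnected ⟨a, Finset.mem_coe.2 ha⟩ ⟨b, Finset.mem_coe.2 hb⟩
  let w := w0.map (SimpleGraph.Embedding.induce (↑S : Set (Fin n))).toHom
  have hsup : ∀ v ∈ w.support, v ∈ S := by
    intro v hv
    rw [SimpleGraph.Walk.support_map] at hv
    rcases List.mem_map.1 hv with ⟨u, _, rfl⟩
    exact Finset.mem_coe.1 u.2
  have hmw : m ∉ w.support := fun hc => hm (hsup m hc)
  obtain ⟨v, hv, hvq⟩ := walk_hits w hmw h1 h2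
  have hvz : v = z := posm_inj hvq
  exact hvz ▸ hsup v hv

lemma itvAt_tube {m : Fin n} {S : Finset (Fin n)} (hne : S.Nonempty) (h : ItvAt m S) :
    IsTube (cycleGraph n) S := by
  refine ⟨hne, ?_⟩
  rw [SimpleGraph.connected_iff]
  refine ⟨?_, ?_⟩
  · have key : ∀ k : ℕ, ∀ x y : Fin n, ∀ hx : x ∈ S, ∀ hy : y ∈ S,
        cycPos n m y = cycPos n m x + k →
        ((cycleGraph n).induce (↑S : Set (Fin n))).Reachable ⟨x, Finset.mem_coe.2 hx⟩
          ⟨y, Finset.mem_coe.2 hy⟩ := by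
      intro k
      induction k with
      | zero =>
        intro x y hx hy he
        have hxy : x = y := posm_inj (m := m) (by omega)
        subst hxy
        exact SimpleGraph.Reachable.refl _
      | succ k ih =>
        intro x y hx hy he
        have hq : cycPos n m x + k < n := by have := posm_lt m y; omega
        have hpy' : cycPos n m (vtx m (cycPos n m x + k)) = cycPos n m x + k := posm_vtx m hq
        have hy'S : vtx m (cycPos n m x + k) ∈ S := h.2 x hx y hy _ (by omega) (by omega)
        have hr := ih x _ hx hy'S (by omega)
        have hadj : (cycleGraph n).Adj (vtx m (cycPos n m x + k)) y := adj_step (m := m) (by omega)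
        exact hr.trans (SimpleGraph.Adj.reachable (by exact hadj))
    rintro ⟨x, hx⟩ ⟨y, hy⟩
    have hx' : x ∈ S := Finset.mem_coe.1 hx
    have hy' : y ∈ S := Finset.mem_coe.1 hy
    rcases le_or_gt (cycPos n m x) (cycPos n m y) with hle | hlt
    · exact key (cycPos n m y - cycPos n m x) x y hx' hy' (by omega)
    · exact (key (cycPos n m x - cycPos n m y) y x hy' hx' (by omega)).symm
  · obtain ⟨a, ha⟩ := hne
    exact ⟨⟨a, Finset.mem_coe.2 ha⟩⟩

lemma itv_bounds {m : Fin n} {S : Finset (Fin n)} (h : ItvAt m S) (hne : S.Nonempty) :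
    ∃ lo hi : ℕ, lo ≤ hi ∧ hi < n - 1 ∧
      (∀ z : Fin n, z ∈ S ↔ lo ≤ cycPos n m z ∧ cycPos n m z ≤ hi) ∧
      (∃ a ∈ S, cycPos n m a = lo) ∧ (∃ b ∈ S, cycPos n m b = hi) := by
  classical
  have hne' : (S.image (cycPos n m)).Nonempty := hne.image _
  obtain ⟨a, haS, halo⟩ := Finset.mem_image.1 ((S.image (cycPos n m)).min'_mem hne')
  obtain ⟨b, hbS, hbhi⟩ := Finset.mem_image.1 ((S.image (cycPos n m)).max'_mem hne')
  refine ⟨_, _, ?_, ?_, ?_, ⟨a, haS, halo⟩, ⟨b, hbS, hbhi⟩⟩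
  · exact Finset.min'_le _ _ ((S.image (cycPos n m)).max'_mem hne')
  · rw [← hbhi]; exact posm_ne (fun e => h.1 (e ▸ hbS))
  · intro z
    constructor
    · intro hz
      exact ⟨Finset.min'_le _ _ (Finset.mem_image_of_mem _ hz),
        Finset.le_max' _ _ (Finset.mem_image_of_mem _ hz)⟩
    · rintro ⟨h1, h2⟩
      exact h.2 a haS b hbS z (by omega) (by omega)


lemma glue {G : SimpleGraph (Fin n)} {P Q : Finset (Fin n)} (hP : IsTube G P) (hQ : IsTube G Q)
    {u v : Fin n} (hu : u ∈ P) (hv : v ∈ Q) (huv : u = v ∨ G.Adj u v) : IsTube G (P ∪ Q) := by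
  obtain ⟨hPne, hPc⟩ := hP
  obtain ⟨hQne, hQc⟩ := hQ
  refine ⟨hPne.mono Finset.subset_union_left, ?_⟩
  rw [SimpleGraph.connected_iff]
  have hPsub : (↑P : Set (Fin n)) ≤ ↑(P ∪ Q) := by
    intro z hz; exact Finset.mem_coe.2 (Finset.mem_union_left _ (Finset.mem_coe.1 hz))
  have hQsub : (↑Q : Set (Fin n)) ≤ ↑(P ∪ Q) := by
    intro z hz; exact Finset.mem_coe.2 (Finset.mem_union_right _ (Finset.mem_coe.1 hz))
  have humem : u ∈ (↑(P ∪ Q) : Set (Fin n)) := Finset.mem_coe.2 (Finset.mem_union_left _ hu)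
  have hvmem : v ∈ (↑(P ∪ Q) : Set (Fin n)) := Finset.mem_coe.2 (Finset.mem_union_right _ hv)
  have reachP : ∀ x (hx : x ∈ P),
      (G.induce ↑(P ∪ Q)).Reachable ⟨x, hPsub (Finset.mem_coe.2 hx)⟩ ⟨u, humem⟩ := by
    intro x hx
    have h := hPc.preconnected ⟨x, Finset.mem_coe.2 hx⟩ ⟨u, Finset.mem_coe.2 hu⟩
    exact h.map (G.induceHomOfLE hPsub).toHom
  have reachQ : ∀ x (hx : x ∈ Q),
      (G.induce ↑(P ∪ Q)).Reachable ⟨x, hQsub (Finset.mem_coe.2 hx)⟩ ⟨v, hvmem⟩ := by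
    intro x hx
    have h := hQc.preconnected ⟨x, Finset.mem_coe.2 hx⟩ ⟨v, Finset.mem_coe.2 hv⟩
    exact h.map (G.induceHomOfLE hQsub).toHom
  have hvu : (G.induce ↑(P ∪ Q)).Reachable ⟨v, hvmem⟩ ⟨u, humem⟩ := by
    rcases huv with rfl | hadj
    · rfl
    · exact SimpleGraph.Adj.reachable (by exact hadj.symm)
  have toU : ∀ z (hz : z ∈ (↑(P ∪ Q) : Set (Fin n))),
      (G.induce ↑(P ∪ Q)).Reachable ⟨z, hz⟩ ⟨u, humem⟩ := by
    intro z hz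
    rcases Finset.mem_union.1 (Finset.mem_coe.1 hz) with h | h
    · exact reachP z h
    · exact (reachQ z h).trans hvu
  refine ⟨?_, ⟨⟨u, humem⟩⟩⟩
  rintro ⟨x, hx⟩ ⟨y, hy⟩
  exact (toU x hx).trans (toU y hy).symm

lemma compat_symm {G : SimpleGraph (Fin n)} {X Y : Finset (Fin n)} (h : TubeCompatible G X Y) :
    TubeCompatible G Y X := by
  unfold TubeCompatible at *
  rw [Finset.union_comm]
  tauto

lemma mem_of_compat {G : SimpleGraph (Fin n)} {J : Finset (Finset (Fin n))}
    (hJ : IsMaxTubing G J) {S : Finset (Fin n)} (hS : IsTube G S)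
    (hc : ∀ X ∈ J, TubeCompatible G S X) : S ∈ J := by
  have h1 : IsTubing G (insert S J) := by
    constructor
    · intro X hX
      rcases Finset.mem_insert.1 hX with rfl | hX
      exacts [hS, hJ.1.1 X hX]
    · intro X hX Y hY
      rcases Finset.mem_insert.1 hX with hX1 | hX1 <;> rcases Finset.mem_insert.1 hY with hY1 | hY1
      · rw [hX1, hY1]; exact Or.inl (subset_refl _)
      · rw [hX1]; exact hc Y hY1
      · rw [hY1]; exact compat_symm (hc X hX1)
      · exact hJ.1.2 X hX1 Y hY1
  have h2 := hJ.2 _ h1 (Finset.subset_insert _ _)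
  rw [← h2]
  exact Finset.mem_insert_self _ _

lemma mem_D {J : Finset (Finset (Fin n))} {x y : Fin n} :
    y ∈ tubingDown J x ↔ ∀ X ∈ J, x ∈ X → y ∈ X := by
  unfold tubingDown; simp

lemma D_self (J : Finset (Finset (Fin n))) (x : Fin n) : x ∈ tubingDown J x :=
  mem_D.2 fun _ _ hx => hx

lemma D_min {J : Finset (Finset (Fin n))} {X : Finset (Fin n)} (hX : X ∈ J) {x : Fin n}
    (hx : x ∈ X) : tubingDown J x ⊆ X := fun _ hy => (mem_D.1 hy) X hX hx

lemma D_mono {J : Finset (Finset (Fin n))} {x y : Fin n} (h : y ∈ tubingDown J x) :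
    tubingDown J y ⊆ tubingDown J x := by
  intro z hz
  rw [mem_D] at hz ⊢
  intro X hX hx
  exact hz X hX (mem_D.1 h X hX hx)

lemma D_mem_or_univ {G : SimpleGraph (Fin n)} {J : Finset (Finset (Fin n))} (hJ : IsTubing G J)
    (x : Fin n) : tubingDown J x ∈ J ∨ tubingDown J x = Finset.univ := by
  classical
  set F := J.filter (fun X => x ∈ X) with hFdef
  rcases F.eq_empty_or_nonempty with hFe | hFne
  · right
    rw [Finset.eq_univ_iff_forall]
    intro y
    rw [mem_D]
    intro X hX hx
    exfalso
    have : X ∈ F := by simp [hFdef, hX, hx]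
    rw [hFe] at this
    simp at this
  · obtain ⟨X₀, hX₀F, hmin⟩ := F.exists_min_image (fun X => X.card) hFne
    have hX₀J : X₀ ∈ J := (Finset.mem_filter.1 hX₀F).1
    have hxX₀ : x ∈ X₀ := (Finset.mem_filter.1 hX₀F).2
    have hsub : ∀ X ∈ F, X₀ ⊆ X := by
      intro X hXF
      have hXJ := (Finset.mem_filter.1 hXF).1
      have hxX := (Finset.mem_filter.1 hXF).2
      rcases hJ.2 X₀ hX₀J X hXJ with h | h | h
      · exact h
      · have hXX : X = X₀ := Finset.eq_of_subset_of_card_le h (hmin X hXF)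
        rw [← hXX]
      · exact absurd (glue (hJ.1 X₀ hX₀J) (hJ.1 X hXJ) hxX₀ hxX (Or.inl rfl)) h
    left
    have hD : tubingDown J x = X₀ := by
      apply Finset.Subset.antisymm
      · exact D_min hX₀J hxX₀
      · intro y hy
        rw [mem_D]
        intro X hX hx
        exact hsub X (by simp [hFdef, hX, hx]) hy
    rw [hD]
    exact hX₀J

lemma D_nested {G : SimpleGraph (Fin n)} {J : Finset (Finset (Fin n))} (hJ : IsTubing G J)
    {x y z : Fin n} (hzx : z ∈ tubingDown J x) (hzy : z ∈ tubingDown J y) :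
    tubingDown J x ⊆ tubingDown J y ∨ tubingDown J y ⊆ tubingDown J x := by
  rcases D_mem_or_univ hJ x with hx | hx
  · rcases D_mem_or_univ hJ y with hy | hy
    · rcases hJ.2 _ hx _ hy with h | h | h
      · exact Or.inl h
      · exact Or.inr h
      · exact absurd (glue (hJ.1 _ hx) (hJ.1 _ hy) hzx hzy (Or.inl rfl)) h
    · exact Or.inl (hy ▸ Finset.subset_univ _)
  · exact Or.inr (hx ▸ Finset.subset_univ _)

lemma walk_cross {G : SimpleGraph (Fin n)} {S : Finset (Fin n)} {a b : Fin n}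
    (w : G.Walk a b) (ha : a ∉ S) (hb : b ∈ S) :
    ∃ p q, G.Adj p q ∧ p ∈ w.support ∧ p ∉ S ∧ q ∈ S := by
  induction w with
  | nil => exact absurd hb ha
  | @cons u x y hadj w ih =>
    by_cases hx : x ∈ S
    · exact ⟨u, x, hadj, by simp, ha, hx⟩
    · obtain ⟨p, q, h1, h2, h3, h4⟩ := ih hx hb
      exact ⟨p, q, h1, by simp [h2], h3, h4⟩

lemma exists_root {G : SimpleGraph (Fin n)} {T : Finset (Finset (Fin n))} (hT : IsTubing G T)
    {X : Finset (Fin n)} (hX : X ∈ T) : ∃ r ∈ X, ∀ Y ∈ T, Y ⊆ X → Y ≠ X → r ∉ Y := by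
  classical
  by_contra hcon
  push_neg at hcon
  set F := T.filter (fun Y => Y ⊆ X ∧ Y ≠ X) with hFdef
  obtain ⟨v₀, hv₀⟩ := (hT.1 X hX).1
  obtain ⟨Y₀, hY₀T, hY₀s, hY₀ne, hv₀Y₀⟩ := hcon v₀ hv₀
  have hFne : F.Nonempty := ⟨Y₀, by simp [hFdef, hY₀T, hY₀s, hY₀ne]⟩
  obtain ⟨Ym, hYmF, hmax⟩ := F.exists_max_image (fun Y => Y.card) hFne
  have hYmT : Ym ∈ T := (Finset.mem_filter.1 hYmF).1
  have hYms : Ym ⊆ X := (Finset.mem_filter.1 hYmF).2.1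
  have hYmne : Ym ≠ X := (Finset.mem_filter.1 hYmF).2.2
  have hproper : ¬ X ⊆ Ym := fun hs => hYmne (Finset.Subset.antisymm hYms hs)
  obtain ⟨v₁, hv₁X, hv₁Ym⟩ := Finset.not_subset.1 hproper
  obtain ⟨u₀, hu₀⟩ := (hT.1 Ym hYmT).1
  obtain ⟨w0⟩ := (hT.1 X hX).2.preconnected ⟨v₁, Finset.mem_coe.2 hv₁X⟩
    ⟨u₀, Finset.mem_coe.2 (hYms hu₀)⟩
  let w := w0.map (SimpleGraph.Embedding.induce (↑X : Set (Fin n))).toHom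
  have hsup : ∀ z ∈ w.support, z ∈ X := by
    intro z hz
    rw [SimpleGraph.Walk.support_map] at hz
    rcases List.mem_map.1 hz with ⟨t, _, rfl⟩
    exact Finset.mem_coe.1 t.2
  obtain ⟨p, q, hadj, hpw, hpY, hqY⟩ := walk_cross (S := Ym) w hv₁Ym hu₀
  obtain ⟨Y', hY'T, hY's, hY'ne, hpY'⟩ := hcon p (hsup p hpw)
  have hY'F : Y' ∈ F := by simp [hFdef, hY'T, hY's, hY'ne]
  rcases hT.2 Y' hY'T Ym hYmT with h | h | h
  · exact hpY (h hpY')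
  · have : Ym = Y' := Finset.eq_of_subset_of_card_le h (hmax Y' hY'F)
    exact hpY (this ▸ hpY')
  · exact h (glue (hT.1 Y' hY'T) (hT.1 Ym hYmT) hpY' hqY (Or.inr hadj))

lemma tubing_card_le {G : SimpleGraph (Fin n)} {T : Finset (Finset (Fin n))}
    (hT : IsTubing G T) : T.card ≤ n := by
  classical
  rcases T.eq_empty_or_nonempty with rfl | ⟨X₀, hX₀⟩
  · simp
  obtain ⟨v₀, _⟩ := (hT.1 X₀ hX₀).1
  have hch : ∀ X, X ∈ T → ∃ rr : Fin n, rr ∈ X ∧ ∀ Y ∈ T, Y ⊆ X → Y ≠ X → rr ∉ Y := by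
    intro X hX
    obtain ⟨r, h1, h2⟩ := exists_root hT hX
    exact ⟨r, h1, h2⟩
  set g : Finset (Fin n) → Fin n := fun X => if hX : X ∈ T then (hch X hX).choose else v₀ with hg
  have hginj : Set.InjOn g ↑T := by
    intro X hXm Y hYm he
    have hXT : X ∈ T := Finset.mem_coe.1 hXm
    have hYT : Y ∈ T := Finset.mem_coe.1 hYm
    rw [hg] at he
    simp only [dif_pos hXT, dif_pos hYT] at he
    obtain ⟨hr1, hr2⟩ := (hch X hXT).choose_spec
    obtain ⟨hs1, hs2⟩ := (hch Y hYT).choose_spec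
    by_contra hne
    have hgY : (hch X hXT).choose ∈ Y := he ▸ hs1
    rcases hT.2 X hXT Y hYT with h | h | h
    · exact hs2 X hXT h hne (he ▸ hr1)
    · exact hr2 Y hYT h (Ne.symm hne) hgY
    · exact h (glue (hT.1 X hXT) (hT.1 Y hYT) hr1 hgY (Or.inl rfl))
  have := Finset.card_le_card_of_injOn g (fun _ _ => Finset.mem_univ _) hginj
  simpa using this


lemma split_lo {m : Fin n} {𝒥 : Finset (Finset (Fin n))}
    (hT : ∀ X ∈ 𝒥, IsTube (cycleGraph n) X)
    (hC : ∀ X ∈ 𝒥, ∀ Y ∈ 𝒥, TubeCompatible (cycleGraph n) X Y)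
    (hP : ∀ X ∈ 𝒥, X ≠ Finset.univ → m ∉ X)
    {A : Finset (Fin n)} (hA : A ∈ 𝒥) (hAu : A ≠ Finset.univ) {q : ℕ}
    (hSne : (A.filter (fun z => cycPos n m z < q)).Nonempty)
    (hSafe : ∀ X ∈ 𝒥, X ⊆ A → X ≠ A →
      X ⊆ A.filter (fun z => cycPos n m z < q) ∨ ∀ z ∈ X, q < cycPos n m z) :
    IsTube (cycleGraph n) (A.filter (fun z => cycPos n m z < q)) ∧
    ∀ X ∈ 𝒥, TubeCompatible (cycleGraph n) (A.filter (fun z => cycPos n m z < q)) X := by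
  classical
  set S := A.filter (fun z => cycPos n m z < q) with hSdef
  have hAt := hT A hA
  have hAm := hP A hA hAu
  have hAitv := tube_itvAt hAt hAm
  obtain ⟨α, β, hαβ, hβ, hiffA, ⟨aα, haα, hpα⟩, ⟨aβ, haβ, hpβ⟩⟩ := itv_bounds hAitv hAt.1
  have hSsub : S ⊆ A := Finset.filter_subset _ _
  have hSitv : ItvAt m S := by
    refine ⟨fun hc => hAm (hSsub hc), ?_⟩
    intro a ha b hb z h1 h2
    have haf := Finset.mem_filter.1 ha
    have hbf := Finset.mem_filter.1 hb
    exact Finset.mem_filter.2 ⟨hAitv.2 a haf.1 b hbf.1 z h1 h2, by omega⟩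
  have hStube := itvAt_tube hSne hSitv
  obtain ⟨s₀, hs₀⟩ := hSne
  have hs₀f := Finset.mem_filter.1 hs₀
  have hs₀A := (hiffA s₀).1 hs₀f.1
  refine ⟨hStube, ?_⟩
  intro X hX
  by_cases hXu : X = Finset.univ
  · rw [hXu]; exact Or.inl (Finset.subset_univ _)
  have hXm := hP X hX hXu
  have hXt := hT X hX
  have hXitv := tube_itvAt hXt hXm
  obtain ⟨γ, δ, hγδ, hδ, hiffX, ⟨xγ, hxγ, hpγ⟩, ⟨xδ, hxδ, hpδ⟩⟩ := itv_bounds hXitv hXt.1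
  have hmSX : m ∉ S ∪ X := by
    intro hc
    rcases Finset.mem_union.1 hc with hc | hc
    exacts [hSitv.1 hc, hXm hc]
  by_cases hsubXA : X ⊆ A
  · by_cases hXA : X = A
    · rw [hXA]; exact Or.inl hSsub
    · rcases hSafe X hX hsubXA hXA with h | h
      · exact Or.inr (Or.inl h)
      · refine Or.inr (Or.inr ?_)
        intro htube
        have hitv := tube_itvAt htube hmSX
        have hqn : q < n := by have := posm_lt m xγ; have := h xγ hxγ; omega
        have hmem : vtx m q ∈ S ∪ X :=
          hitv.2 s₀ (Finset.mem_union_left _ hs₀) xγ (Finset.mem_union_right _ hxγ) _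
            (by rw [posm_vtx m hqn]; omega) (by rw [posm_vtx m hqn]; have := h xγ hxγ; omega)
        rcases Finset.mem_union.1 hmem with hc | hc
        · have := (Finset.mem_filter.1 hc).2; rw [posm_vtx m hqn] at this; omega
        · have := h _ hc; rw [posm_vtx m hqn] at this; omega
  · by_cases hsubAX : A ⊆ X
    · exact Or.inl (hSsub.trans hsubAX)
    rcases hC A hA X hX with h | h | hsep
    · exact absurd h hsubAX
    · exact absurd h hsubXA
    have hdisj : ∀ z, z ∈ X → z ∉ A := by
      intro z hz1 hz2
      exact hsep (glue hAt hXt hz2 hz1 (Or.inl rfl))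
    have hside : δ < α ∨ β < γ := by
      by_contra hc
      push_neg at hc
      have hq1 : max α γ < n := by omega
      have h1 : vtx m (max α γ) ∈ A := (hiffA _).2 (by rw [posm_vtx m hq1]; omega)
      have h2 : vtx m (max α γ) ∈ X := (hiffX _).2 (by rw [posm_vtx m hq1]; omega)
      exact hdisj _ h2 h1
    rcases hside with hbelow | habove
    · by_cases hgap : δ + 1 < α
      · refine Or.inr (Or.inr ?_)
        intro htube
        have hitv := tube_itvAt htube hmSX
        have hgn : δ + 1 < n := by omega
        have hmem : vtx m (δ+1) ∈ S ∪ X :=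
          hitv.2 xδ (Finset.mem_union_right _ hxδ) s₀ (Finset.mem_union_left _ hs₀) _
            (by rw [posm_vtx m hgn]; omega) (by rw [posm_vtx m hgn]; omega)
        rcases Finset.mem_union.1 hmem with hc | hc
        · have := (hiffA _).1 (hSsub hc); rw [posm_vtx m hgn] at this; omega
        · have := (hiffX _).1 hc; rw [posm_vtx m hgn] at this; omega
      · exfalso
        apply hsep
        refine itvAt_tube (m := m) ⟨aα, Finset.mem_union_left _ haα⟩ ⟨?_, ?_⟩
        · intro hc
          rcases Finset.mem_union.1 hc with hc | hc
          exacts [hAm hc, hXm hc]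
        · intro a ha b hb z h1 h2
          have hbnds : ∀ w, w ∈ A ∪ X → γ ≤ cycPos n m w ∧ cycPos n m w ≤ β := by
            intro w hw
            rcases Finset.mem_union.1 hw with hw | hw
            · have := (hiffA w).1 hw; omega
            · have := (hiffX w).1 hw; omega
          have h1' := hbnds a ha
          have h2' := hbnds b hb
          by_cases hz : cycPos n m z ≤ δ
          · exact Finset.mem_union_right _ ((hiffX z).2 ⟨by omega, hz⟩)
          · exact Finset.mem_union_left _ ((hiffA z).2 ⟨by omega, by omega⟩)
    · refine Or.inr (Or.inr ?_)
      intro htube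
      have hitv := tube_itvAt htube hmSX
      by_cases hqβ : β < q
      · apply hsep
        have hSA : S = A := by
          apply Finset.Subset.antisymm hSsub
          intro z hz
          exact Finset.mem_filter.2 ⟨hz, by have := (hiffA z).1 hz; omega⟩
        rw [← hSA]
        exact htube
      · have hmem : aβ ∈ S ∪ X :=
          hitv.2 s₀ (Finset.mem_union_left _ hs₀) xγ (Finset.mem_union_right _ hxγ) aβ
            (by omega) (by omega)
        rcases Finset.mem_union.1 hmem with hc | hc
        · have := (Finset.mem_filter.1 hc).2; omega
        · exact hdisj aβ hc haβ

lemma split_hi {m : Fin n} {𝒥 : Finset (Finset (Fin n))}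
    (hT : ∀ X ∈ 𝒥, IsTube (cycleGraph n) X)
    (hC : ∀ X ∈ 𝒥, ∀ Y ∈ 𝒥, TubeCompatible (cycleGraph n) X Y)
    (hP : ∀ X ∈ 𝒥, X ≠ Finset.univ → m ∉ X)
    {A : Finset (Fin n)} (hA : A ∈ 𝒥) (hAu : A ≠ Finset.univ) {q : ℕ}
    (hSne : (A.filter (fun z => q < cycPos n m z)).Nonempty)
    (hSafe : ∀ X ∈ 𝒥, X ⊆ A → X ≠ A →
      X ⊆ A.filter (fun z => q < cycPos n m z) ∨ ∀ z ∈ X, cycPos n m z < q) :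
    IsTube (cycleGraph n) (A.filter (fun z => q < cycPos n m z)) ∧
    ∀ X ∈ 𝒥, TubeCompatible (cycleGraph n) (A.filter (fun z => q < cycPos n m z)) X := by
  classical
  set S := A.filter (fun z => q < cycPos n m z) with hSdef
  have hAt := hT A hA
  have hAm := hP A hA hAu
  have hAitv := tube_itvAt hAt hAm
  obtain ⟨α, β, hαβ, hβ, hiffA, ⟨aα, haα, hpα⟩, ⟨aβ, haβ, hpβ⟩⟩ := itv_bounds hAitv hAt.1
  have hSsub : S ⊆ A := Finset.filter_subset _ _
  have hSitv : ItvAt m S := by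
    refine ⟨fun hc => hAm (hSsub hc), ?_⟩
    intro a ha b hb z h1 h2
    have haf := Finset.mem_filter.1 ha
    have hbf := Finset.mem_filter.1 hb
    exact Finset.mem_filter.2 ⟨hAitv.2 a haf.1 b hbf.1 z h1 h2, by omega⟩
  have hStube := itvAt_tube hSne hSitv
  obtain ⟨s₀, hs₀⟩ := hSne
  have hs₀f := Finset.mem_filter.1 hs₀
  have hs₀A := (hiffA s₀).1 hs₀f.1
  have hqn : q < n := by have := posm_lt m s₀; omega
  refine ⟨hStube, ?_⟩
  intro X hX
  by_cases hXu : X = Finset.univ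
  · rw [hXu]; exact Or.inl (Finset.subset_univ _)
  have hXm := hP X hX hXu
  have hXt := hT X hX
  have hXitv := tube_itvAt hXt hXm
  obtain ⟨γ, δ, hγδ, hδ, hiffX, ⟨xγ, hxγ, hpγ⟩, ⟨xδ, hxδ, hpδ⟩⟩ := itv_bounds hXitv hXt.1
  have hmSX : m ∉ S ∪ X := by
    intro hc
    rcases Finset.mem_union.1 hc with hc | hc
    exacts [hSitv.1 hc, hXm hc]
  by_cases hsubXA : X ⊆ A
  · by_cases hXA : X = A
    · rw [hXA]; exact Or.inl hSsub
    · rcases hSafe X hX hsubXA hXA with h | h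
      · exact Or.inr (Or.inl h)
      · refine Or.inr (Or.inr ?_)
        intro htube
        have hitv := tube_itvAt htube hmSX
        have hmem : vtx m q ∈ S ∪ X :=
          hitv.2 xδ (Finset.mem_union_right _ hxδ) s₀ (Finset.mem_union_left _ hs₀) _
            (by rw [posm_vtx m hqn]; have := h xδ hxδ; omega) (by rw [posm_vtx m hqn]; omega)
        rcases Finset.mem_union.1 hmem with hc | hc
        · have := (Finset.mem_filter.1 hc).2; rw [posm_vtx m hqn] at this; omega
        · have := h _ hc; rw [posm_vtx m hqn] at this; omega
  · by_cases hsubAX : A ⊆ X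
    · exact Or.inl (hSsub.trans hsubAX)
    rcases hC A hA X hX with h | h | hsep
    · exact absurd h hsubAX
    · exact absurd h hsubXA
    have hdisj : ∀ z, z ∈ X → z ∉ A := by
      intro z hz1 hz2
      exact hsep (glue hAt hXt hz2 hz1 (Or.inl rfl))
    have hside : δ < α ∨ β < γ := by
      by_contra hc
      push_neg at hc
      have hq1 : max α γ < n := by omega
      have h1 : vtx m (max α γ) ∈ A := (hiffA _).2 (by rw [posm_vtx m hq1]; omega)
      have h2 : vtx m (max α γ) ∈ X := (hiffX _).2 (by rw [posm_vtx m hq1]; omega)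
      exact hdisj _ h2 h1
    rcases hside with hbelow | habove
    · refine Or.inr (Or.inr ?_)
      intro htube
      have hitv := tube_itvAt htube hmSX
      by_cases hqα : q < α
      · apply hsep
        have hSA : S = A := by
          apply Finset.Subset.antisymm hSsub
          intro z hz
          exact Finset.mem_filter.2 ⟨hz, by have := (hiffA z).1 hz; omega⟩
        rw [← hSA]
        exact htube
      · have hmem : aα ∈ S ∪ X :=
          hitv.2 xδ (Finset.mem_union_right _ hxδ) s₀ (Finset.mem_union_left _ hs₀) aα
            (by omega) (by omega)
        rcases Finset.mem_union.1 hmem with hc | hc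
        · have := (Finset.mem_filter.1 hc).2; omega
        · exact hdisj aα hc haα
    · by_cases hgap : β + 1 < γ
      · refine Or.inr (Or.inr ?_)
        intro htube
        have hitv := tube_itvAt htube hmSX
        have hgn : β + 1 < n := by omega
        have hmem : vtx m (β+1) ∈ S ∪ X :=
          hitv.2 s₀ (Finset.mem_union_left _ hs₀) xγ (Finset.mem_union_right _ hxγ) _
            (by rw [posm_vtx m hgn]; omega) (by rw [posm_vtx m hgn]; omega)
        rcases Finset.mem_union.1 hmem with hc | hc
        · have := (hiffA _).1 (hSsub hc); rw [posm_vtx m hgn] at this; omega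
        · have := (hiffX _).1 hc; rw [posm_vtx m hgn] at this; omega
      · exfalso
        apply hsep
        refine itvAt_tube (m := m) ⟨aα, Finset.mem_union_left _ haα⟩ ⟨?_, ?_⟩
        · intro hc
          rcases Finset.mem_union.1 hc with hc | hc
          exacts [hAm hc, hXm hc]
        · intro a ha b hb z h1 h2
          have hbnds : ∀ w, w ∈ A ∪ X → α ≤ cycPos n m w ∧ cycPos n m w ≤ δ := by
            intro w hw
            rcases Finset.mem_union.1 hw with hw | hw
            · have := (hiffA w).1 hw; omega
            · have := (hiffX w).1 hw; omega
          have h1' := hbnds a ha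
          have h2' := hbnds b hb
          by_cases hz : cycPos n m z ≤ β
          · exact Finset.mem_union_left _ ((hiffA z).2 ⟨by omega, hz⟩)
          · exact Finset.mem_union_right _ ((hiffX z).2 ⟨by omega, by omega⟩)


lemma singleton_tube {G : SimpleGraph (Fin n)} (a : Fin n) : IsTube G {a} := by
  refine ⟨⟨a, Finset.mem_singleton_self a⟩, ?_⟩
  rw [SimpleGraph.connected_iff]
  refine ⟨?_, ⟨⟨a, by simp⟩⟩⟩
  rintro ⟨x, hx⟩ ⟨y, hy⟩
  have hx' : x = a := by simpa using hx
  have hy' : y = a := by simpa using hy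
  subst hx'
  subst hy'
  exact SimpleGraph.Reachable.refl _

lemma adj_succ (hn2 : 2 ≤ n) (c : Fin n) : (cycleGraph n).Adj c (vtx c 0) := by
  have hc := c.is_lt
  have hval : ((vtx c 0 : Fin n) : ℕ) = ((c:ℕ) + 1) % n := by
    show ((c:ℕ) + 1 + 0) % n = _
    norm_num
  apply cyc_adj'.2
  by_cases h : (c:ℕ) + 1 < n
  · rw [Nat.mod_eq_of_lt h] at hval
    exact ⟨fun e => by have := congrArg Fin.val e; omega, by omega⟩
  · have h0 : ((c:ℕ) + 1) % n = 0 := by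
      rw [(by omega : (c:ℕ) + 1 = n)]
      exact Nat.mod_self n
    rw [h0] at hval
    exact ⟨fun e => by have := congrArg Fin.val e; omega, by omega⟩

lemma vtx_zero_ne (hn2 : 2 ≤ n) (c : Fin n) : vtx c 0 ≠ c := by
  have hc := c.is_lt
  intro e
  have he : ((c:ℕ) + 1 + 0) % n = c := congrArg Fin.val e
  by_cases h : (c:ℕ) + 1 < n
  · rw [Nat.mod_eq_of_lt (by omega)] at he; omega
  · rw [(by omega : (c:ℕ) + 1 + 0 = n), Nat.mod_self] at he; omega

lemma univ_tube (hn : 0 < n) : IsTube (cycleGraph n) (Finset.univ : Finset (Fin n)) := by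
  rcases Nat.lt_or_ge n 2 with h1 | h2
  · have he : (Finset.univ : Finset (Fin n)) = {⟨0, hn⟩} := by
      ext z
      simp only [Finset.mem_univ, Finset.mem_singleton, true_iff]
      apply Fin.ext
      have := z.is_lt
      omega
    rw [he]
    exact singleton_tube _
  · set c : Fin n := ⟨0, hn⟩ with hcdef
    have hE : ItvAt c (Finset.univ.erase c) := by
      refine ⟨Finset.notMem_erase _ _, ?_⟩
      intro a ha b hb z hz1 hz2
      refine Finset.mem_erase.2 ⟨?_, Finset.mem_univ _⟩
      intro e
      have hb' : b ≠ c := (Finset.mem_erase.1 hb).1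
      have hbn := posm_ne hb'
      rw [e, posm_self] at hz2
      omega
    have hEne : (Finset.univ.erase c).Nonempty :=
      ⟨vtx c 0, Finset.mem_erase.2 ⟨vtx_zero_ne h2 c, Finset.mem_univ _⟩⟩
    have hEt := itvAt_tube hEne hE
    have hun : Finset.univ.erase c ∪ {c} = Finset.univ := by
      ext z
      simp only [Finset.mem_union, Finset.mem_erase, Finset.mem_univ, Finset.mem_singleton,
        and_true, iff_true]
      by_cases hz : z = c
      · exact Or.inr hz
      · exact Or.inl hz
    rw [← hun]
    exact glue hEt (singleton_tube c) (Finset.mem_erase.2 ⟨vtx_zero_ne h2 c, Finset.mem_univ _⟩)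
      (Finset.mem_singleton_self c) (Or.inr (adj_succ h2 c).symm)

section WithJ

variable {J : Finset (Finset (Fin n))} {m : Fin n}

lemma univ_mem (hn : 0 < n) (hJ : IsMaxTubing (cycleGraph n) J) : Finset.univ ∈ J :=
  mem_of_compat hJ (univ_tube hn) (fun X _ => Or.inr (Or.inl (Finset.subset_univ X)))

lemma proper_avoid (hm : tubingDown J m = Finset.univ) {X : Finset (Fin n)} (hX : X ∈ J)
    (hXu : X ≠ Finset.univ) : m ∉ X := by
  intro hmem
  exact hXu (Finset.univ_subset_iff.1 (hm ▸ D_min hX hmem))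

lemma D_eq_univ_imp (hJ : IsMaxTubing (cycleGraph n) J) (hm : tubingDown J m = Finset.univ)
    {x : Fin n} (hx : tubingDown J x = Finset.univ) : x = m := by
  by_contra hne
  have hn2 : 2 ≤ n := by
    rcases Nat.lt_or_ge n 2 with h | h
    · exfalso
      apply hne
      apply Fin.ext
      have := x.is_lt
      have := m.is_lt
      omega
    · exact h
  have hSitv : ItvAt x (Finset.univ.erase x) := by
    refine ⟨Finset.notMem_erase _ _, ?_⟩
    intro a ha b hb z hz1 hz2
    refine Finset.mem_erase.2 ⟨?_, Finset.mem_univ _⟩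
    intro e
    have hb' : b ≠ x := (Finset.mem_erase.1 hb).1
    have hbn := posm_ne hb'
    rw [e, posm_self] at hz2
    omega
  have hSne : (Finset.univ.erase x).Nonempty := ⟨m, Finset.mem_erase.2 ⟨Ne.symm hne, Finset.mem_univ _⟩⟩
  have hSt := itvAt_tube hSne hSitv
  have hSJ : Finset.univ.erase x ∈ J := by
    apply mem_of_compat hJ hSt
    intro X hX
    by_cases hXu : X = Finset.univ
    · rw [hXu]; exact Or.inl (Finset.subset_univ _)
    · refine Or.inr (Or.inl ?_)
      intro z hz
      refine Finset.mem_erase.2 ⟨?_, Finset.mem_univ _⟩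
      intro e
      rw [e] at hz
      exact hXu (Finset.univ_subset_iff.1 (hx ▸ D_min hX hz))
  have hsub : tubingDown J m ⊆ Finset.univ.erase x :=
    D_min hSJ (Finset.mem_erase.2 ⟨Ne.symm hne, Finset.mem_univ _⟩)
  rw [hm] at hsub
  exact (Finset.mem_erase.1 (hsub (Finset.mem_univ x))).1 rfl

lemma D_memJ (hJ : IsMaxTubing (cycleGraph n) J) (hm : tubingDown J m = Finset.univ)
    {x : Fin n} (hx : x ≠ m) : tubingDown J x ∈ J :=
  (D_mem_or_univ hJ.1 x).resolve_right (fun h => hx (D_eq_univ_imp hJ hm h))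

lemma D_ne_univ (hJ : IsMaxTubing (cycleGraph n) J) (hm : tubingDown J m = Finset.univ)
    {x : Fin n} (hx : x ≠ m) : tubingDown J x ≠ Finset.univ :=
  fun h => hx (D_eq_univ_imp hJ hm h)

lemma m_not_in_D (hJ : IsMaxTubing (cycleGraph n) J) (hm : tubingDown J m = Finset.univ)
    {x : Fin n} (hx : x ≠ m) : m ∉ tubingDown J x :=
  proper_avoid hm (D_memJ hJ hm hx) (D_ne_univ hJ hm hx)

lemma D_itv (hJ : IsMaxTubing (cycleGraph n) J) (hm : tubingDown J m = Finset.univ)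
    {x : Fin n} (hx : x ≠ m) : ItvAt m (tubingDown J x) :=
  tube_itvAt (hJ.1.1 _ (D_memJ hJ hm hx)) (m_not_in_D hJ hm hx)

lemma D_inj (hJ : IsMaxTubing (cycleGraph n) J) (hm : tubingDown J m = Finset.univ)
    {x y : Fin n} (h : tubingDown J x = tubingDown J y) : x = y := by
  by_contra hne
  by_cases hxm : x = m
  · rw [hxm] at h hne
    exact hne (D_eq_univ_imp hJ hm (h.symm.trans hm)).symm
  by_cases hym : y = m
  · rw [hym] at h hne
    exact hne (D_eq_univ_imp hJ hm (h.trans hm))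
  have aux : ∀ a b : Fin n, a ≠ m → b ≠ m → tubingDown J a = tubingDown J b →
      cycPos n m a < cycPos n m b → False := by
    intro a b ham hbm hab hlt
    have hAJ : tubingDown J a ∈ J := D_memJ hJ hm ham
    have hAu : tubingDown J a ≠ Finset.univ := D_ne_univ hJ hm ham
    have hbA : b ∈ tubingDown J a := by rw [hab]; exact D_self J b
    have haA : a ∈ tubingDown J a := D_self J a
    have hSne : ((tubingDown J a).filter (fun z => cycPos n m z < cycPos n m b)).Nonempty :=
      ⟨a, Finset.mem_filter.2 ⟨haA, hlt⟩⟩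
    have hSafe : ∀ X ∈ J, X ⊆ tubingDown J a → X ≠ tubingDown J a →
        X ⊆ (tubingDown J a).filter (fun z => cycPos n m z < cycPos n m b) ∨
        ∀ z ∈ X, cycPos n m b < cycPos n m z := by
      intro X hX hXA hXneA
      have hXu : X ≠ Finset.univ := fun e => hAu (Finset.univ_subset_iff.1 (e ▸ hXA))
      have hbX : b ∉ X := by
        intro hbX
        apply hXneA
        refine Finset.Subset.antisymm hXA ?_
        rw [hab]
        exact D_min hX hbX
      have hXitv := tube_itvAt (hJ.1.1 X hX) (proper_avoid hm hX hXu)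
      obtain ⟨γ, δ, hγδ, hδ, hiffX, _, _⟩ := itv_bounds hXitv (hJ.1.1 X hX).1
      have hbnot : ¬(γ ≤ cycPos n m b ∧ cycPos n m b ≤ δ) := fun hc => hbX ((hiffX b).2 hc)
      by_cases hcase : δ < cycPos n m b
      · left
        intro z hz
        exact Finset.mem_filter.2 ⟨hXA hz, by have := (hiffX z).1 hz; omega⟩
      · right
        intro z hz
        have := (hiffX z).1 hz
        omega
    obtain ⟨hSt, hScompat⟩ := split_lo hJ.1.1 hJ.1.2 (fun X hX => proper_avoid hm hX) hAJ hAu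
      hSne hSafe
    have hSJ := mem_of_compat hJ hSt hScompat
    have haS : a ∈ (tubingDown J a).filter (fun z => cycPos n m z < cycPos n m b) :=
      Finset.mem_filter.2 ⟨haA, hlt⟩
    have hsub := D_min hSJ haS
    have hbS := hsub hbA
    have := (Finset.mem_filter.1 hbS).2
    omega
  rcases Nat.lt_or_ge (cycPos n m x) (cycPos n m y) with h1 | h1
  · exact aux x y hxm hym h h1
  · have hne' : cycPos n m y ≠ cycPos n m x := fun e => hne (posm_inj e).symm
    exact aux y x hym hxm h.symm (by omega)

lemma cov_ne_m (hJ : IsMaxTubing (cycleGraph n) J) (hm : tubingDown J m = Finset.univ)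
    {c p : Fin n} (h : TreeCovBy J c p) : c ≠ m := by
  intro e
  rw [e] at h
  have hDp : tubingDown J p = Finset.univ :=
    Finset.univ_subset_iff.1 (hm ▸ D_mono h.1)
  exact h.2.1 (D_eq_univ_imp hJ hm hDp).symm

/-- The strict ancestors of `x`. -/
def anc (J : Finset (Finset (Fin n))) (x : Fin n) : Finset (Fin n) :=
  Finset.univ.filter (fun z => x ∈ tubingDown J z ∧ z ≠ x)

lemma anc_nonempty (hm : tubingDown J m = Finset.univ) {x : Fin n} (hx : x ≠ m) :
    (anc J x).Nonempty := ⟨m, by simp [anc, hm, Ne.symm hx]⟩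

/-- The parent of `x` in the tree. -/
noncomputable def pa (J : Finset (Finset (Fin n))) (x : Fin n) : Fin n :=
  if h : (anc J x).Nonempty
    then ((anc J x).exists_min_image (fun z => (tubingDown J z).card) h).choose
    else x

lemma pa_prop (hm : tubingDown J m = Finset.univ) {x : Fin n} (hx : x ≠ m) :
    x ∈ tubingDown J (pa J x) ∧ pa J x ≠ x ∧
      ∀ z ∈ anc J x, (tubingDown J (pa J x)).card ≤ (tubingDown J z).card := by
  have h := anc_nonempty hm hx
  rw [pa, dif_pos h]
  obtain ⟨h1, h2⟩ := ((anc J x).exists_min_image (fun z => (tubingDown J z).card) h).choose_spec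
  have h1' := Finset.mem_filter.1 h1
  exact ⟨h1'.2.1, h1'.2.2, h2⟩

lemma pa_cov (hJ : IsMaxTubing (cycleGraph n) J) (hm : tubingDown J m = Finset.univ)
    {x : Fin n} (hx : x ≠ m) : TreeCovBy J x (pa J x) := by
  obtain ⟨h1, h2, h3⟩ := pa_prop hm hx
  refine ⟨h1, Ne.symm h2, ?_⟩
  intro z hz1 hz2
  by_cases hzx : z = x
  · exact Or.inl hzx
  right
  have hzanc : z ∈ anc J x := Finset.mem_filter.2 ⟨Finset.mem_univ _, hz1, hzx⟩
  have hsub : tubingDown J z ⊆ tubingDown J (pa J x) := D_mono hz2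
  have heq : tubingDown J z = tubingDown J (pa J x) :=
    Finset.eq_of_subset_of_card_le hsub (h3 z hzanc)
  exact D_inj hJ hm heq

lemma cov_unique (hJ : IsMaxTubing (cycleGraph n) J) (hm : tubingDown J m = Finset.univ)
    {c p : Fin n} (h : TreeCovBy J c p) : p = pa J c := by
  have hc := cov_ne_m hJ hm h
  obtain ⟨h1, h2, h3⟩ := pa_prop hm hc
  have hpanc : p ∈ anc J c := Finset.mem_filter.2 ⟨Finset.mem_univ _, h.1, Ne.symm h.2.1⟩
  rcases D_nested hJ.1 h.1 h1 with hnest | hnest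
  · have heq : tubingDown J p = tubingDown J (pa J c) :=
      Finset.eq_of_subset_of_card_le hnest (h3 p hpanc)
    exact D_inj hJ hm heq
  · have hpap : pa J c ∈ tubingDown J p := hnest (D_self _ _)
    rcases h.2.2 (pa J c) h1 hpap with he | he
    · exact absurd he h2
    · exact he.symm

lemma covBy_iff (hJ : IsMaxTubing (cycleGraph n) J) (hm : tubingDown J m = Finset.univ)
    {c p : Fin n} : TreeCovBy J c p ↔ c ≠ m ∧ p = pa J c := by
  constructor
  · intro h
    exact ⟨cov_ne_m hJ hm h, cov_unique hJ hm h⟩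
  · rintro ⟨h1, rfl⟩
    exact pa_cov hJ hm h1

lemma pa_not_le (hJ : IsMaxTubing (cycleGraph n) J) (hm : tubingDown J m = Finset.univ)
    {x : Fin n} (hx : x ≠ m) : pa J x ∉ tubingDown J x := by
  obtain ⟨h1, h2, _⟩ := pa_prop hm hx
  intro hc
  exact h2 (D_inj hJ hm (Finset.Subset.antisymm (D_mono hc) (D_mono h1)))

lemma card_lt_pa (hJ : IsMaxTubing (cycleGraph n) J) (hm : tubingDown J m = Finset.univ)
    {x : Fin n} (hx : x ≠ m) : (tubingDown J x).card < (tubingDown J (pa J x)).card := by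
  obtain ⟨h1, h2, _⟩ := pa_prop hm hx
  apply Finset.card_lt_card
  rw [Finset.ssubset_def]
  exact ⟨D_mono h1, fun hsub => pa_not_le hJ hm hx (hsub (D_self _ _))⟩

lemma orbit_aux (hJ : IsMaxTubing (cycleGraph n) J) (hm : tubingDown J m = Finset.univ) :
    ∀ k, ∀ x y : Fin n, x ∈ tubingDown J y →
      (tubingDown J y).card ≤ (tubingDown J x).card + k → ∃ i, (pa J)^[i] x = y := by
  intro k
  induction k with
  | zero =>
    intro x y h1 h2
    have heq : tubingDown J x = tubingDown J y :=
      Finset.eq_of_subset_of_card_le (D_mono h1) (by omega)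
    exact ⟨0, D_inj hJ hm heq⟩
  | succ k ih =>
    intro x y h1 h2
    by_cases hxy : x = y
    · exact ⟨0, hxy⟩
    have hxm : x ≠ m := by
      intro e
      rw [e] at h1
      exact hxy (e.trans (D_eq_univ_imp hJ hm
        (Finset.univ_subset_iff.1 (hm ▸ D_mono h1))).symm)
    obtain ⟨hp1, hp2, hp3⟩ := pa_prop hm hxm
    have hyanc : y ∈ anc J x :=
      Finset.mem_filter.2 ⟨Finset.mem_univ _, h1, fun e => hxy e.symm⟩
    rcases D_nested hJ.1 h1 hp1 with hnest | hnest
    · have heq : tubingDown J y = tubingDown J (pa J x) :=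
        Finset.eq_of_subset_of_card_le hnest (hp3 y hyanc)
      exact ⟨1, by simpa using (D_inj hJ hm heq).symm⟩
    · have hmem : pa J x ∈ tubingDown J y := hnest (D_self _ _)
      have hcard := card_lt_pa hJ hm hxm
      obtain ⟨i, hi⟩ := ih (pa J x) y hmem (by omega)
      exact ⟨i + 1, by rw [Function.iterate_succ_apply]; exact hi⟩

lemma orbit (hJ : IsMaxTubing (cycleGraph n) J) (hm : tubingDown J m = Finset.univ)
    {x y : Fin n} (h : x ∈ tubingDown J y) : ∃ i, (pa J)^[i] x = y := by
  apply orbit_aux hJ hm ((tubingDown J y).card) x y h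
  omega


lemma rootD (hJ : IsMaxTubing (cycleGraph n) J) {X : Finset (Fin n)} (hX : X ∈ J) :
    ∃ r ∈ X, tubingDown J r = X := by
  obtain ⟨r, hrX, hr⟩ := exists_root hJ.1 hX
  refine ⟨r, hrX, ?_⟩
  apply Finset.Subset.antisymm (D_min hX hrX)
  intro z hz
  rw [mem_D]
  intro Y hY hrY
  rcases hJ.1.2 Y hY X hX with h | h | h
  · by_cases he : Y = X
    · rw [he]; exact hz
    · exact absurd hrY (hr Y hY h he)
  · exact h hz
  · exact absurd (glue (hJ.1.1 Y hY) (hJ.1.1 X hX) hrY hrX (Or.inl rfl)) h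

lemma child_hi (hJ : IsMaxTubing (cycleGraph n) J) (hm : tubingDown J m = Finset.univ)
    {c p : Fin n} (h : TreeCovBy J c p) (hp : p ≠ m)
    (hlt : cycPos n m p < cycPos n m c) :
    tubingDown J c = (tubingDown J p).filter (fun z => cycPos n m p < cycPos n m z) := by
  have hAJ : tubingDown J p ∈ J := D_memJ hJ hm hp
  have hAu := D_ne_univ hJ hm hp
  have hcA : c ∈ tubingDown J p := h.1
  have hSne : ((tubingDown J p).filter (fun z => cycPos n m p < cycPos n m z)).Nonempty :=
    ⟨c, Finset.mem_filter.2 ⟨hcA, hlt⟩⟩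
  have hSafe : ∀ X ∈ J, X ⊆ tubingDown J p → X ≠ tubingDown J p →
      X ⊆ (tubingDown J p).filter (fun z => cycPos n m p < cycPos n m z) ∨
      ∀ z ∈ X, cycPos n m z < cycPos n m p := by
    intro X hX hXA hXne
    have hXu : X ≠ Finset.univ := fun e => hAu (Finset.univ_subset_iff.1 (e ▸ hXA))
    have hpX : p ∉ X := by
      intro hpX
      exact hXne (Finset.Subset.antisymm hXA (D_min hX hpX))
    have hXitv := tube_itvAt (hJ.1.1 X hX) (proper_avoid hm hX hXu)
    obtain ⟨γ, δ, hγδ, hδ, hiffX, _, _⟩ := itv_bounds hXitv (hJ.1.1 X hX).1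
    have hpnot : ¬(γ ≤ cycPos n m p ∧ cycPos n m p ≤ δ) := fun hc2 => hpX ((hiffX p).2 hc2)
    by_cases hcase : cycPos n m p < γ
    · left
      intro z hz
      exact Finset.mem_filter.2 ⟨hXA hz, by have := (hiffX z).1 hz; omega⟩
    · right
      intro z hz
      have := (hiffX z).1 hz
      omega
  obtain ⟨hSt, hScompat⟩ := split_hi hJ.1.1 hJ.1.2 (fun X hX => proper_avoid hm hX) hAJ hAu
    hSne hSafe
  have hSJ := mem_of_compat hJ hSt hScompat
  obtain ⟨r, hrR, hrD⟩ := rootD hJ hSJ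
  have hcR : c ∈ (tubingDown J p).filter (fun z => cycPos n m p < cycPos n m z) :=
    Finset.mem_filter.2 ⟨hcA, hlt⟩
  have hcr : treeLE J c r := by
    show c ∈ tubingDown J r
    rw [hrD]
    exact hcR
  have hrp : treeLE J r p := (Finset.mem_filter.1 (hrD ▸ D_self J r)).1
  rcases h.2.2 r hcr hrp with he | he
  · rw [he] at hrD
    exact hrD
  · exfalso
    rw [he] at hrR
    have := (Finset.mem_filter.1 hrR).2
    omega

lemma child_lo (hJ : IsMaxTubing (cycleGraph n) J) (hm : tubingDown J m = Finset.univ)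
    {c p : Fin n} (h : TreeCovBy J c p) (hp : p ≠ m)
    (hlt : cycPos n m c < cycPos n m p) :
    tubingDown J c = (tubingDown J p).filter (fun z => cycPos n m z < cycPos n m p) := by
  have hAJ : tubingDown J p ∈ J := D_memJ hJ hm hp
  have hAu := D_ne_univ hJ hm hp
  have hcA : c ∈ tubingDown J p := h.1
  have hSne : ((tubingDown J p).filter (fun z => cycPos n m z < cycPos n m p)).Nonempty :=
    ⟨c, Finset.mem_filter.2 ⟨hcA, hlt⟩⟩
  have hSafe : ∀ X ∈ J, X ⊆ tubingDown J p → X ≠ tubingDown J p →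
      X ⊆ (tubingDown J p).filter (fun z => cycPos n m z < cycPos n m p) ∨
      ∀ z ∈ X, cycPos n m p < cycPos n m z := by
    intro X hX hXA hXne
    have hXu : X ≠ Finset.univ := fun e => hAu (Finset.univ_subset_iff.1 (e ▸ hXA))
    have hpX : p ∉ X := by
      intro hpX
      exact hXne (Finset.Subset.antisymm hXA (D_min hX hpX))
    have hXitv := tube_itvAt (hJ.1.1 X hX) (proper_avoid hm hX hXu)
    obtain ⟨γ, δ, hγδ, hδ, hiffX, _, _⟩ := itv_bounds hXitv (hJ.1.1 X hX).1
    have hpnot : ¬(γ ≤ cycPos n m p ∧ cycPos n m p ≤ δ) := fun hc2 => hpX ((hiffX p).2 hc2)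
    by_cases hcase : δ < cycPos n m p
    · left
      intro z hz
      exact Finset.mem_filter.2 ⟨hXA hz, by have := (hiffX z).1 hz; omega⟩
    · right
      intro z hz
      have := (hiffX z).1 hz
      omega
  obtain ⟨hSt, hScompat⟩ := split_lo hJ.1.1 hJ.1.2 (fun X hX => proper_avoid hm hX) hAJ hAu
    hSne hSafe
  have hSJ := mem_of_compat hJ hSt hScompat
  obtain ⟨r, hrR, hrD⟩ := rootD hJ hSJ
  have hcR : c ∈ (tubingDown J p).filter (fun z => cycPos n m z < cycPos n m p) :=
    Finset.mem_filter.2 ⟨hcA, hlt⟩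
  have hcr : treeLE J c r := by
    show c ∈ tubingDown J r
    rw [hrD]
    exact hcR
  have hrp : treeLE J r p := (Finset.mem_filter.1 (hrD ▸ D_self J r)).1
  rcases h.2.2 r hcr hrp with he | he
  · rw [he] at hrD
    exact hrD
  · exfalso
    rw [he] at hrR
    have := (Finset.mem_filter.1 hrR).2
    omega

lemma m_child (hJ : IsMaxTubing (cycleGraph n) J) (hm : tubingDown J m = Finset.univ)
    (hn2 : 2 ≤ n) {c : Fin n} (h : TreeCovBy J c m) :
    tubingDown J c = Finset.univ.erase m := by
  have hPitv : ItvAt m (Finset.univ.erase m) := by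
    refine ⟨Finset.notMem_erase _ _, ?_⟩
    intro a ha b hb z hz1 hz2
    refine Finset.mem_erase.2 ⟨?_, Finset.mem_univ _⟩
    intro e
    have hb' : b ≠ m := (Finset.mem_erase.1 hb).1
    have hbn := posm_ne hb'
    rw [e, posm_self] at hz2
    omega
  have hPne : (Finset.univ.erase m).Nonempty :=
    ⟨vtx m 0, Finset.mem_erase.2 ⟨vtx_zero_ne hn2 m, Finset.mem_univ _⟩⟩
  have hPt := itvAt_tube hPne hPitv
  have hPJ : Finset.univ.erase m ∈ J := by
    apply mem_of_compat hJ hPt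
    intro X hX
    by_cases hXu : X = Finset.univ
    · rw [hXu]; exact Or.inl (Finset.subset_univ _)
    · refine Or.inr (Or.inl ?_)
      intro z hz
      refine Finset.mem_erase.2 ⟨?_, Finset.mem_univ _⟩
      intro e
      exact proper_avoid hm hX hXu (e ▸ hz)
  obtain ⟨r, hrR, hrD⟩ := rootD hJ hPJ
  have hcm := cov_ne_m hJ hm h
  have hcr : treeLE J c r := by
    show c ∈ tubingDown J r
    rw [hrD]
    exact Finset.mem_erase.2 ⟨hcm, Finset.mem_univ _⟩
  have hrm : treeLE J r m := by
    show r ∈ tubingDown J m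
    rw [hm]
    exact Finset.mem_univ _
  rcases h.2.2 r hcr hrm with he | he
  · rw [he] at hrD
    exact hrD
  · exfalso
    rw [he] at hrR
    exact (Finset.mem_erase.1 hrR).1 rfl

lemma J_card (hJ : IsMaxTubing (cycleGraph n) J) (hm : tubingDown J m = Finset.univ) :
    J.card = n := by
  apply le_antisymm (tubing_card_le hJ.1)
  have hmem : ∀ x : Fin n, tubingDown J x ∈ J := by
    intro x
    by_cases hx : x = m
    · rw [hx, hm]
      exact univ_mem m.pos hJ
    · exact D_memJ hJ hm hx
  have := Finset.card_le_card_of_injOn (s := (Finset.univ : Finset (Fin n))) (t := J)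
    (tubingDown J) (fun x _ => hmem x) (fun x _ y _ hxy => D_inj hJ hm hxy)
  simpa using this


lemma pa_m (hJ : IsMaxTubing (cycleGraph n) J) (hm : tubingDown J m = Finset.univ) :
    pa J m = m := by
  rw [pa, dif_neg]
  rintro ⟨z, hz⟩
  obtain ⟨_, h1, h2⟩ := Finset.mem_filter.1 hz
  exact h2 (D_eq_univ_imp hJ hm (Finset.univ_subset_iff.1 (hm ▸ D_mono h1)))

lemma x_in_pa (hJ : IsMaxTubing (cycleGraph n) J) (hm : tubingDown J m = Finset.univ)
    (x : Fin n) : x ∈ tubingDown J (pa J x) := by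
  by_cases hx : x = m
  · rw [hx, pa_m hJ hm]
    exact D_self J m
  · exact (pa_prop hm hx).1

lemma iter_le (hJ : IsMaxTubing (cycleGraph n) J) (hm : tubingDown J m = Finset.univ)
    (a : Fin n) (k d : ℕ) : (pa J)^[k] a ∈ tubingDown J ((pa J)^[k + d] a) := by
  induction d with
  | zero => exact D_self _ _
  | succ d ih =>
    have hstep : (pa J)^[k + (d+1)] a = pa J ((pa J)^[k+d] a) := by
      rw [(by omega : k + (d+1) = (k+d) + 1), Function.iterate_succ_apply']
    rw [hstep]
    exact D_mono (x_in_pa hJ hm _) ih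

lemma side_lemma {c p : Fin n} (hc : c ≠ m) (hp : p ≠ m)
    (hlt : cycPos n m p < cycPos n m c) (hnd : ¬ p < c) : (c:ℕ) < m ∧ (m:ℕ) < p := by
  have hmv := m.is_lt
  have hpv := p.is_lt
  have hcv := c.is_lt
  have hc' : (c:ℕ) ≠ m := fun e => hc (Fin.ext e)
  have hp' : (p:ℕ) ≠ m := fun e => hp (Fin.ext e)
  have hnd' : ¬((p:ℕ) < (c:ℕ)) := fun hh => hnd (by rw [Fin.lt_def]; exact hh)
  by_cases h1 : (m:ℕ) < p <;> by_cases h2 : (m:ℕ) < c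
  · rw [posm_gt h1, posm_gt h2] at hlt; omega
  · rw [posm_gt h1, posm_le (v := c) (by omega)] at hlt; exact ⟨by omega, h1⟩
  · rw [posm_le (v := p) (by omega), posm_gt h2] at hlt; omega
  · rw [posm_le (v := p) (by omega), posm_le (v := c) (by omega)] at hlt; omega

lemma cross_zero (hJ : IsMaxTubing (cycleGraph n) J) (hm : tubingDown J m = Finset.univ)
    {c : Fin n} (hcm : c ≠ m) (h1 : (c:ℕ) < m) (h2 : (m:ℕ) < pa J c) :
    (⟨0, m.pos⟩ : Fin n) ∈ tubingDown J c := by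
  have hmv := m.is_lt
  have hpv := (pa J c).is_lt
  have hcv := c.is_lt
  have hpm : pa J c ≠ m := fun e => by rw [e] at h2; omega
  have hpos0 : cycPos n m (⟨0, m.pos⟩ : Fin n) = n - (m:ℕ) - 1 := by
    rw [posm_le (by simp)]
    show (0:ℕ) + n - (m:ℕ) - 1 = n - (m:ℕ) - 1
    omega
  have hposp : cycPos n m (pa J c) = ((pa J c):ℕ) - m - 1 := posm_gt h2
  have hposc : cycPos n m c = (c:ℕ) + n - m - 1 := posm_le (by omega)
  have hA0 : (⟨0, m.pos⟩ : Fin n) ∈ tubingDown J (pa J c) := by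
    have hitv := D_itv hJ hm hpm
    obtain ⟨α, β, _, _, hiffA, _, _⟩ := itv_bounds hitv ⟨pa J c, D_self J (pa J c)⟩
    have hpA := (hiffA (pa J c)).1 (D_self J (pa J c))
    have hcA := (hiffA c).1 (pa_prop hm hcm).1
    rw [hposp] at hpA
    rw [hposc] at hcA
    apply (hiffA _).2
    rw [hpos0]
    exact ⟨by omega, by omega⟩
  have hcov := pa_cov hJ hm hcm
  have hlt : cycPos n m (pa J c) < cycPos n m c := by
    rw [hposp, hposc]; omega
  rw [child_hi hJ hm hcov hpm hlt]
  refine Finset.mem_filter.2 ⟨hA0, ?_⟩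
  rw [hposp, hpos0]
  omega

/-- Climb from the parent of `c` to the top of its run of early vertices. -/
noncomputable def climb (J : Finset (Finset (Fin n))) (m c : Fin n) : Fin n :=
  if h : ∃ j : ℕ, ¬((m:ℕ) < (((pa J)^[j+1] (pa J c) : Fin n) : ℕ)) then
    (pa J)^[Nat.find h] (pa J c)
  else c

lemma climb_spec (hJ : IsMaxTubing (cycleGraph n) J) (hm : tubingDown J m = Finset.univ)
    {c : Fin n} (hcm : c ≠ m) (h1 : (c:ℕ) < m) (h2 : (m:ℕ) < pa J c) :
    ∃ jj : ℕ, climb J m c = (pa J)^[jj] (pa J c) ∧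
      (∀ i ≤ jj, (m:ℕ) < (((pa J)^[i] (pa J c) : Fin n) : ℕ)) ∧
      ¬((m:ℕ) < (((pa J)^[jj+1] (pa J c) : Fin n) : ℕ)) := by
  have hex : ∃ j : ℕ, ¬((m:ℕ) < (((pa J)^[j+1] (pa J c) : Fin n) : ℕ)) := by
    obtain ⟨i, hi⟩ := orbit hJ hm (show pa J c ∈ tubingDown J m by rw [hm]; exact Finset.mem_univ _)
    rcases i with _ | i'
    · simp only [Function.iterate_zero, id] at hi
      rw [hi] at h2
      omega
    · exact ⟨i', by rw [hi]; omega⟩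
  refine ⟨Nat.find hex, ?_, ?_, Nat.find_spec hex⟩
  · rw [climb, dif_pos hex]
  · intro i hi
    rcases i with _ | i'
    · simpa using h2
    · exact not_not.1 (Nat.find_min hex (by omega))

lemma part1 (hJ : IsMaxTubing (cycleGraph n) J) (hm : tubingDown J m = Finset.univ) :
    (Finset.univ.filter (fun c : Fin n =>
        ∃ p, TreeCovBy J c p ∧ p ≠ m ∧ cycPos n m p < cycPos n m c)).card
      ≤ (Finset.univ.filter (fun c : Fin n => ∃ p, TreeCovBy J c p ∧ p < c)).card := by
  classical
  set S1 := Finset.univ.filter (fun c : Fin n =>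
      ∃ p, TreeCovBy J c p ∧ p ≠ m ∧ cycPos n m p < cycPos n m c) with hS1def
  set SD := Finset.univ.filter (fun c : Fin n => ∃ p, TreeCovBy J c p ∧ p < c) with hSDdef
  have hS1 : ∀ c : Fin n, c ∈ S1 ↔
      (c ≠ m ∧ pa J c ≠ m ∧ cycPos n m (pa J c) < cycPos n m c) := by
    intro c
    rw [hS1def]
    simp only [Finset.mem_filter, Finset.mem_univ, true_and]
    constructor
    · rintro ⟨p, hcov, hp1, hp2⟩
      have hc := cov_ne_m hJ hm hcov
      have he := cov_unique hJ hm hcov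
      rw [he] at hp1 hp2
      exact ⟨hc, hp1, hp2⟩
    · rintro ⟨hh1, hh2, hh3⟩
      exact ⟨pa J c, pa_cov hJ hm hh1, hh2, hh3⟩
  have hSD : ∀ c : Fin n, c ∈ SD ↔ (c ≠ m ∧ pa J c < c) := by
    intro c
    rw [hSDdef]
    simp only [Finset.mem_filter, Finset.mem_univ, true_and]
    constructor
    · rintro ⟨p, hcov, hp1⟩
      have hc := cov_ne_m hJ hm hcov
      have he := cov_unique hJ hm hcov
      rw [he] at hp1
      exact ⟨hc, hp1⟩
    · rintro ⟨hh1, hh2⟩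
      exact ⟨pa J c, pa_cov hJ hm hh1, hh2⟩
  have hfacts : ∀ d : Fin n, d ∈ S1 \ SD → d ≠ m ∧ (d:ℕ) < m ∧ (m:ℕ) < pa J d := by
    intro d hd
    rw [Finset.mem_sdiff] at hd
    obtain ⟨hd1, hd2⟩ := hd
    obtain ⟨hdm, hpm, hlt⟩ := (hS1 d).1 hd1
    have hnd : ¬ pa J d < d := fun hh => hd2 ((hSD d).2 ⟨hdm, hh⟩)
    obtain ⟨x1, x2⟩ := side_lemma hdm hpm hlt hnd
    exact ⟨hdm, x1, x2⟩
  have hkey : (S1 \ SD).card ≤ (SD \ S1).card := by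
    apply Finset.card_le_card_of_injOn (fun c => climb J m c)
    · intro c hcmem
      obtain ⟨hcm, hcl, hcg⟩ := hfacts c hcmem
      obtain ⟨jj, hjj1, hjj2, hjj3⟩ := climb_spec hJ hm hcm hcl hcg
      have hum : (m:ℕ) < ((climb J m c : Fin n) : ℕ) := by
        rw [hjj1]
        exact hjj2 jj le_rfl
      have humne : climb J m c ≠ m := fun e => by rw [e] at hum; omega
      have hpau : pa J (climb J m c) = (pa J)^[jj+1] (pa J c) := by
        rw [hjj1]
        exact (Function.iterate_succ_apply' (pa J) jj (pa J c)).symm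
      have hpaum : ((pa J (climb J m c) : Fin n) : ℕ) ≤ m := by
        rw [hpau]
        omega
      beta_reduce
      rw [Finset.mem_coe, Finset.mem_sdiff]
      constructor
      · apply (hSD _).2
        refine ⟨humne, ?_⟩
        rw [Fin.lt_def]
        omega
      · intro hc3
        obtain ⟨_, hq2, hq3⟩ := (hS1 _).1 hc3
        by_cases heq2 : ((pa J (climb J m c) : Fin n) : ℕ) = (m:ℕ)
        · exact hq2 (Fin.ext heq2)
        · have hlt2 : ((pa J (climb J m c) : Fin n) : ℕ) < m := by omega
          have e1 : cycPos n m (pa J (climb J m c)) = (pa J (climb J m c)) + n - m - 1 :=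
            posm_le (by omega)
          have e2 : cycPos n m (climb J m c) = ((climb J m c : Fin n) : ℕ) - m - 1 :=
            posm_gt hum
          have := (climb J m c).is_lt
          have := m.is_lt
          omega
    · intro c hc1 c' hc1' he
      have hcf := hfacts c (Finset.mem_coe.1 hc1)
      have hcf' := hfacts c' (Finset.mem_coe.1 hc1')
      have h0c : (⟨0, m.pos⟩ : Fin n) ∈ tubingDown J c :=
        cross_zero hJ hm hcf.1 hcf.2.1 hcf.2.2
      have h0c' : (⟨0, m.pos⟩ : Fin n) ∈ tubingDown J c' :=
        cross_zero hJ hm hcf'.1 hcf'.2.1 hcf'.2.2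
      have aux : ∀ a b : Fin n, (a ≠ m ∧ (a:ℕ) < m ∧ (m:ℕ) < pa J a) →
          (b ≠ m ∧ (b:ℕ) < m ∧ (m:ℕ) < pa J b) → climb J m a = climb J m b →
          a ∈ tubingDown J b → a = b := by
        intro a b ha hb heq hab
        by_contra hne
        obtain ⟨jja, e1a, e2a, e3a⟩ := climb_spec hJ hm ha.1 ha.2.1 ha.2.2
        obtain ⟨jjb, e1b, e2b, e3b⟩ := climb_spec hJ hm hb.1 hb.2.1 hb.2.2
        have h0a : (⟨0, m.pos⟩ : Fin n) ∈ tubingDown J a :=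
          cross_zero hJ hm ha.1 ha.2.1 ha.2.2
        have h0pa : (⟨0, m.pos⟩ : Fin n) ∈ tubingDown J (pa J a) :=
          D_mono (x_in_pa hJ hm a) h0a
        have h0b : (⟨0, m.pos⟩ : Fin n) ∈ tubingDown J b :=
          cross_zero hJ hm hb.1 hb.2.1 hb.2.2
        rcases D_nested hJ.1 h0b h0pa with hnest | hnest
        · have hbpa : b ∈ tubingDown J (pa J a) := hnest (D_self _ _)
          rcases (pa_cov hJ hm ha.1).2.2 b hab hbpa with hh | hh
          · exact hne hh.symm
          · have hv := hb.2.1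
            rw [hh] at hv
            have := ha.2.2
            omega
        · have hpab : pa J a ∈ tubingDown J b := hnest (D_self _ _)
          obtain ⟨i, hi⟩ := orbit hJ hm hpab
          by_cases hij : i ≤ jja
          · have hmlt := e2a i hij
            rw [hi] at hmlt
            have := hb.2.1
            omega
          · have hu_in : climb J m a ∈ tubingDown J b := by
              rw [e1a, ← hi]
              have hil := iter_le hJ hm (pa J a) jja (i - jja)
              rw [(by omega : jja + (i - jja) = i)] at hil
              exact hil
            have hb_in : b ∈ tubingDown J (climb J m a) := by
              rw [heq, e1b]
              have hil := iter_le hJ hm b 0 (jjb + 1)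
              rw [(by omega : 0 + (jjb + 1) = jjb + 1), Function.iterate_succ_apply] at hil
              simpa using hil
            have hub : climb J m a = b :=
              D_inj hJ hm (Finset.Subset.antisymm (D_mono hu_in) (D_mono hb_in))
            have hum : (m:ℕ) < ((climb J m a : Fin n) : ℕ) := by
              rw [e1a]
              exact e2a jja le_rfl
            rw [hub] at hum
            have := hb.2.1
            omega
      rcases D_nested hJ.1 h0c h0c' with hnest | hnest
      · exact aux c c' hcf hcf' he (hnest (D_self _ _))
      · exact (aux c' c hcf' hcf he.symm (hnest (D_self _ _))).symm
  have e1 := Finset.card_inter_add_card_sdiff S1 SD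
  have e2 := Finset.card_inter_add_card_sdiff SD S1
  rw [Finset.inter_comm] at e2
  omega


lemma part2 (hJ : IsMaxTubing (cycleGraph n) J) (hm : tubingDown J m = Finset.univ) :
    (Finset.univ.filter (fun p : Fin n =>
        ∃ c₁ c₂, c₁ ≠ c₂ ∧ TreeCovBy J c₁ p ∧ TreeCovBy J c₂ p)).card
      ≤ (Finset.univ.filter (fun c : Fin n =>
        ∃ p, TreeCovBy J c p ∧ p ≠ m ∧ cycPos n m p < cycPos n m c)).card := by
  classical
  have hex : ∀ p : Fin n, (∃ c₁ c₂, c₁ ≠ c₂ ∧ TreeCovBy J c₁ p ∧ TreeCovBy J c₂ p) →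
      ∃ c, TreeCovBy J c p ∧ p ≠ m ∧ cycPos n m p < cycPos n m c := by
    intro p hp
    obtain ⟨c₁, c₂, hne, hcov₁, hcov₂⟩ := hp
    have hn2 : 2 ≤ n := by
      by_contra hh
      have h1 := c₁.is_lt
      have h2 := c₂.is_lt
      exact hne (Fin.ext (by omega))
    have hpm : p ≠ m := by
      intro e
      rw [e] at hcov₁ hcov₂
      have e₁ := m_child hJ hm hn2 hcov₁
      have e₂ := m_child hJ hm hn2 hcov₂
      exact hne (D_inj hJ hm (e₁.trans e₂.symm))
    have key : ∀ cc, TreeCovBy J cc p → ¬ cycPos n m p < cycPos n m cc →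
        cycPos n m cc < cycPos n m p := by
      intro cc hcov hno
      have : cycPos n m cc ≠ cycPos n m p := fun e => hcov.2.1 (posm_inj e)
      omega
    by_cases h₁ : cycPos n m p < cycPos n m c₁
    · exact ⟨c₁, hcov₁, hpm, h₁⟩
    by_cases h₂ : cycPos n m p < cycPos n m c₂
    · exact ⟨c₂, hcov₂, hpm, h₂⟩
    exfalso
    have e₁ := child_lo hJ hm hcov₁ hpm (key c₁ hcov₁ h₁)
    have e₂ := child_lo hJ hm hcov₂ hpm (key c₂ hcov₂ h₂)
    exact hne (D_inj hJ hm (e₁.trans e₂.symm))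
  set f : Fin n → Fin n := fun p =>
    if hp : ∃ c, TreeCovBy J c p ∧ p ≠ m ∧ cycPos n m p < cycPos n m c then hp.choose else p
    with hf
  apply Finset.card_le_card_of_injOn f
  · intro p hp
    simp only [Finset.mem_coe, Finset.mem_filter, Finset.mem_univ, true_and] at hp
    have hpe := hex p hp
    have hspec := hpe.choose_spec
    have hfp : f p = hpe.choose := by rw [hf]; exact dif_pos hpe
    rw [hfp]
    simp only [Finset.mem_coe, Finset.mem_filter, Finset.mem_univ, true_and]
    exact ⟨p, hspec⟩
  · intro p hp p' hp' he
    simp only [Finset.coe_filter, Finset.mem_univ, true_and, Set.mem_setOf_eq] at hp hp'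
    have hpe := hex p hp
    have hpe' := hex p' hp'
    have hfp : f p = hpe.choose := by rw [hf]; exact dif_pos hpe
    have hfp' : f p' = hpe'.choose := by rw [hf]; exact dif_pos hpe'
    have hcc : hpe.choose = hpe'.choose := by rw [← hfp, ← hfp', he]
    have u1 := cov_unique hJ hm hpe.choose_spec.1
    have u2 := cov_unique hJ hm hpe'.choose_spec.1
    rw [hcc] at u1
    exact u1.trans u2.symm

lemma erase_one_tube (hn2 : 2 ≤ n) (x : Fin n) :
    IsTube (cycleGraph n) (Finset.univ.erase x) := by
  have hSitv : ItvAt x (Finset.univ.erase x) := by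
    refine ⟨Finset.notMem_erase _ _, ?_⟩
    intro a ha b hb z hz1 hz2
    refine Finset.mem_erase.2 ⟨?_, Finset.mem_univ _⟩
    intro e
    have hb' : b ≠ x := (Finset.mem_erase.1 hb).1
    have hbn := posm_ne hb'
    rw [e, posm_self] at hz2
    omega
  exact itvAt_tube ⟨vtx x 0, Finset.mem_erase.2 ⟨vtx_zero_ne hn2 x, Finset.mem_univ _⟩⟩ hSitv

lemma flip_assemble (hJ : IsMaxTubing (cycleGraph n) J) (hm : tubingDown J m = Finset.univ)
    {c : Fin n} (hc : c ≠ m) {X : Finset (Fin n)} {x₀ : Fin n}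
    (hXt : IsTube (cycleGraph n) X)
    (hcompat : ∀ Z ∈ J.erase (tubingDown J c), TubeCompatible (cycleGraph n) X Z)
    (hXnJ : X ∉ J)
    (hx₀X : x₀ ∈ X)
    (hDK : ∀ z ∈ X, ∀ Z ∈ J, x₀ ∈ Z → z ∈ Z)
    (hx₀c : x₀ < c) :
    FlipCover (cycleGraph n) (insert X (J.erase (tubingDown J c))) J := by
  have hYJ : tubingDown J c ∈ J := D_memJ hJ hm hc
  have hXY : X ≠ tubingDown J c := fun e => hXnJ (e ▸ hYJ)
  have hXne : X ∉ J.erase (tubingDown J c) := fun hh => hXnJ (Finset.mem_of_mem_erase hh)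
  have hKtub : IsTubing (cycleGraph n) (insert X (J.erase (tubingDown J c))) := by
    constructor
    · intro Z hZ
      rcases Finset.mem_insert.1 hZ with h | h
      · rw [h]; exact hXt
      · exact hJ.1.1 _ (Finset.mem_of_mem_erase h)
    · intro Z1 h1 Z2 h2
      rcases Finset.mem_insert.1 h1 with e1 | e1 <;> rcases Finset.mem_insert.1 h2 with e2 | e2
      · rw [e1, e2]; exact Or.inl (subset_refl _)
      · rw [e1]; exact hcompat Z2 e2
      · rw [e2]; exact compat_symm (hcompat Z1 e1)
      · exact hJ.1.2 _ (Finset.mem_of_mem_erase e1) _ (Finset.mem_of_mem_erase e2)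
  have hn1 : 1 ≤ n := m.pos
  have hKcard : (insert X (J.erase (tubingDown J c))).card = n := by
    rw [Finset.card_insert_of_notMem hXne, Finset.card_erase_of_mem hYJ, J_card hJ hm]
    omega
  have hKmax : IsMaxTubing (cycleGraph n) (insert X (J.erase (tubingDown J c))) := by
    refine ⟨hKtub, ?_⟩
    intro T' hT' hsub
    have hcard := tubing_card_le hT'
    exact (Finset.eq_of_subset_of_card_le hsub (by omega)).symm
  have hDKX : tubingDown (insert X (J.erase (tubingDown J c))) x₀ = X := by
    apply Finset.Subset.antisymm
    · exact D_min (Finset.mem_insert_self _ _) hx₀X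
    · intro z hz
      rw [mem_D]
      intro Z hZ hx₀Z
      rcases Finset.mem_insert.1 hZ with e | e
      · rw [e]; exact hz
      · exact hDK z hz Z (Finset.mem_of_mem_erase e) hx₀Z
  exact ⟨hKmax, hJ, X, tubingDown J c, Finset.mem_insert_self _ _, hYJ, hXY,
    Finset.erase_insert hXne, x₀, c, hDKX, rfl, hx₀c⟩

lemma flip_exists (hJ : IsMaxTubing (cycleGraph n) J) (hm : tubingDown J m = Finset.univ)
    {c : Fin n} (hc : c ≠ m) (hdesc : pa J c < c) :
    ∃ X : Finset (Fin n), X ∉ J ∧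
      FlipCover (cycleGraph n) (insert X (J.erase (tubingDown J c))) J := by
  classical
  have hn2 : 2 ≤ n := by
    by_contra hh
    have h1 := c.is_lt
    have h2 := m.is_lt
    exact hc (Fin.ext (by omega))
  have hcov := pa_cov hJ hm hc
  by_cases hpm : pa J c = m
  · -- flip at the root edge
    have hY : tubingDown J c = Finset.univ.erase m := m_child hJ hm hn2 (by rw [← hpm]; exact hcov)
    have hXt := erase_one_tube hn2 c
    have hXnJ : Finset.univ.erase c ∉ J := by
      intro hmem
      have hXu : Finset.univ.erase c ≠ Finset.univ := by
        intro e
        have : c ∈ Finset.univ.erase c := by rw [e]; exact Finset.mem_univ c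
        exact (Finset.mem_erase.1 this).1 rfl
      exact proper_avoid hm hmem hXu
        (Finset.mem_erase.2 ⟨fun e => hc e.symm, Finset.mem_univ _⟩)
    refine ⟨_, hXnJ, flip_assemble hJ hm hc hXt ?_ hXnJ
      (Finset.mem_erase.2 ⟨fun e => hc e.symm, Finset.mem_univ _⟩) ?_ ?_⟩
    · intro Z hZ
      have hZJ := Finset.mem_of_mem_erase hZ
      have hZY := (Finset.mem_erase.1 hZ).1
      by_cases hZu : Z = Finset.univ
      · rw [hZu]; exact Or.inl (Finset.subset_univ _)
      · have hmZ := proper_avoid hm hZJ hZu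
        have hcZ : c ∉ Z := by
          intro hcZ
          apply hZY
          apply Finset.Subset.antisymm
          · intro z hz
            rw [hY]
            exact Finset.mem_erase.2 ⟨fun e => hmZ (e ▸ hz), Finset.mem_univ _⟩
          · exact D_min hZJ hcZ
        refine Or.inr (Or.inl ?_)
        intro z hz
        exact Finset.mem_erase.2 ⟨fun e => hcZ (e ▸ hz), Finset.mem_univ _⟩
    · intro z hz Z hZ hmZ
      have := D_min hZ hmZ
      rw [hm] at this
      exact this (Finset.mem_univ z)
    · rw [← hpm]; exact hdesc
  · -- flip at an internal edge
    have hpne : cycPos n m (pa J c) ≠ cycPos n m c := fun e => hcov.2.1 (posm_inj e).symm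
    have hAJ : tubingDown J (pa J c) ∈ J := D_memJ hJ hm hpm
    have hAu : tubingDown J (pa J c) ≠ Finset.univ := D_ne_univ hJ hm hpm
    have hpA : pa J c ∈ tubingDown J (pa J c) := D_self _ _
    have hcA : c ∈ tubingDown J (pa J c) := hcov.1
    have hAe : tubingDown J (pa J c) ∈ J.erase (tubingDown J c) := by
      refine Finset.mem_erase.2 ⟨?_, hAJ⟩
      intro e
      exact pa_not_le hJ hm hc (e ▸ hpA)
    have hT' : ∀ Z ∈ J.erase (tubingDown J c), IsTube (cycleGraph n) Z :=
      fun Z hZ => hJ.1.1 Z (Finset.mem_of_mem_erase hZ)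
    have hC' : ∀ Z1 ∈ J.erase (tubingDown J c), ∀ Z2 ∈ J.erase (tubingDown J c),
        TubeCompatible (cycleGraph n) Z1 Z2 :=
      fun Z1 h1 Z2 h2 => hJ.1.2 Z1 (Finset.mem_of_mem_erase h1) Z2 (Finset.mem_of_mem_erase h2)
    have hP' : ∀ Z ∈ J.erase (tubingDown J c), Z ≠ Finset.univ → m ∉ Z :=
      fun Z hZ => proper_avoid hm (Finset.mem_of_mem_erase hZ)
    by_cases hside : cycPos n m (pa J c) < cycPos n m c
    · -- right child
      have hY := child_hi hJ hm hcov hpm hside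
      have hSne : ((tubingDown J (pa J c)).filter
          (fun z => cycPos n m z < cycPos n m c)).Nonempty :=
        ⟨pa J c, Finset.mem_filter.2 ⟨hpA, hside⟩⟩
      have hSafe : ∀ Z ∈ J.erase (tubingDown J c), Z ⊆ tubingDown J (pa J c) →
          Z ≠ tubingDown J (pa J c) →
          Z ⊆ (tubingDown J (pa J c)).filter (fun z => cycPos n m z < cycPos n m c) ∨
          ∀ z ∈ Z, cycPos n m c < cycPos n m z := by
        intro Z hZe hZA hZne
        have hZJ := Finset.mem_of_mem_erase hZe
        have hZY := (Finset.mem_erase.1 hZe).1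
        have hZu : Z ≠ Finset.univ := fun e => hAu (Finset.univ_subset_iff.1 (e ▸ hZA))
        have hpZ : pa J c ∉ Z := fun hh => hZne (Finset.Subset.antisymm hZA (D_min hZJ hh))
        have hZitv := tube_itvAt (hJ.1.1 Z hZJ) (proper_avoid hm hZJ hZu)
        by_cases hcZ : c ∈ Z
        · exfalso
          have hYZ : tubingDown J c ⊆ Z := D_min hZJ hcZ
          have hss : tubingDown J c ⊂ Z :=
            ⟨hYZ, fun hh => hZY (Finset.Subset.antisymm hh hYZ)⟩
          obtain ⟨z, hzZ, hzY⟩ := Finset.exists_of_ssubset hss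
          have hzA : z ∈ tubingDown J (pa J c) := hZA hzZ
          have hzp : ¬(cycPos n m (pa J c) < cycPos n m z) := by
            rw [hY] at hzY
            intro hh
            exact hzY (Finset.mem_filter.2 ⟨hzA, hh⟩)
          have hzne : cycPos n m z ≠ cycPos n m (pa J c) :=
            fun e => hpZ ((posm_inj e) ▸ hzZ)
          exact hpZ (hZitv.2 z hzZ c hcZ (pa J c) (by omega) (by omega))
        · obtain ⟨γ, δ, _, _, hiffZ, _, _⟩ := itv_bounds hZitv (hJ.1.1 Z hZJ).1
          have hcnot : ¬(γ ≤ cycPos n m c ∧ cycPos n m c ≤ δ) :=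
            fun hh => hcZ ((hiffZ c).2 hh)
          by_cases hcase : δ < cycPos n m c
          · left
            intro z hz
            exact Finset.mem_filter.2 ⟨hZA hz, by have := (hiffZ z).1 hz; omega⟩
          · right
            intro z hz
            have := (hiffZ z).1 hz
            omega
      obtain ⟨hXt, hXcompat⟩ := split_lo hT' hC' hP' hAe hAu hSne hSafe
      have hpX : pa J c ∈ (tubingDown J (pa J c)).filter
          (fun z => cycPos n m z < cycPos n m c) := Finset.mem_filter.2 ⟨hpA, hside⟩
      have hcX : c ∉ (tubingDown J (pa J c)).filter
          (fun z => cycPos n m z < cycPos n m c) := by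
        intro hh
        exact absurd (Finset.mem_filter.1 hh).2 (by omega)
      have hXnJ : (tubingDown J (pa J c)).filter
          (fun z => cycPos n m z < cycPos n m c) ∉ J := by
        intro hmem
        exact hcX (D_min hmem hpX hcA)
      exact ⟨_, hXnJ, flip_assemble hJ hm hc hXt hXcompat hXnJ hpX
        (fun z hz Z hZ hpZ => D_min hZ hpZ ((Finset.mem_filter.1 hz).1)) hdesc⟩
    · -- left child
      have hside' : cycPos n m c < cycPos n m (pa J c) := by omega
      have hY := child_lo hJ hm hcov hpm hside'
      have hSne : ((tubingDown J (pa J c)).filter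
          (fun z => cycPos n m c < cycPos n m z)).Nonempty :=
        ⟨pa J c, Finset.mem_filter.2 ⟨hpA, hside'⟩⟩
      have hSafe : ∀ Z ∈ J.erase (tubingDown J c), Z ⊆ tubingDown J (pa J c) →
          Z ≠ tubingDown J (pa J c) →
          Z ⊆ (tubingDown J (pa J c)).filter (fun z => cycPos n m c < cycPos n m z) ∨
          ∀ z ∈ Z, cycPos n m z < cycPos n m c := by
        intro Z hZe hZA hZne
        have hZJ := Finset.mem_of_mem_erase hZe
        have hZY := (Finset.mem_erase.1 hZe).1
        have hZu : Z ≠ Finset.univ := fun e => hAu (Finset.univ_subset_iff.1 (e ▸ hZA))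
        have hpZ : pa J c ∉ Z := fun hh => hZne (Finset.Subset.antisymm hZA (D_min hZJ hh))
        have hZitv := tube_itvAt (hJ.1.1 Z hZJ) (proper_avoid hm hZJ hZu)
        by_cases hcZ : c ∈ Z
        · exfalso
          have hYZ : tubingDown J c ⊆ Z := D_min hZJ hcZ
          have hss : tubingDown J c ⊂ Z :=
            ⟨hYZ, fun hh => hZY (Finset.Subset.antisymm hh hYZ)⟩
          obtain ⟨z, hzZ, hzY⟩ := Finset.exists_of_ssubset hss
          have hzA : z ∈ tubingDown J (pa J c) := hZA hzZ
          have hzp : ¬(cycPos n m z < cycPos n m (pa J c)) := by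
            rw [hY] at hzY
            intro hh
            exact hzY (Finset.mem_filter.2 ⟨hzA, hh⟩)
          have hzne : cycPos n m z ≠ cycPos n m (pa J c) :=
            fun e => hpZ ((posm_inj e) ▸ hzZ)
          exact hpZ (hZitv.2 c hcZ z hzZ (pa J c) (by omega) (by omega))
        · obtain ⟨γ, δ, _, _, hiffZ, _, _⟩ := itv_bounds hZitv (hJ.1.1 Z hZJ).1
          have hcnot : ¬(γ ≤ cycPos n m c ∧ cycPos n m c ≤ δ) :=
            fun hh => hcZ ((hiffZ c).2 hh)
          by_cases hcase : cycPos n m c < γ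
          · left
            intro z hz
            exact Finset.mem_filter.2 ⟨hZA hz, by have := (hiffZ z).1 hz; omega⟩
          · right
            intro z hz
            have := (hiffZ z).1 hz
            omega
      obtain ⟨hXt, hXcompat⟩ := split_hi hT' hC' hP' hAe hAu hSne hSafe
      have hpX : pa J c ∈ (tubingDown J (pa J c)).filter
          (fun z => cycPos n m c < cycPos n m z) := Finset.mem_filter.2 ⟨hpA, hside'⟩
      have hcX : c ∉ (tubingDown J (pa J c)).filter
          (fun z => cycPos n m c < cycPos n m z) := by
        intro hh
        exact absurd (Finset.mem_filter.1 hh).2 (by omega)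
      have hXnJ : (tubingDown J (pa J c)).filter
          (fun z => cycPos n m c < cycPos n m z) ∉ J := by
        intro hmem
        exact hcX (D_min hmem hpX hcA)
      exact ⟨_, hXnJ, flip_assemble hJ hm hc hXt hXcompat hXnJ hpX
        (fun z hz Z hZ hpZ => D_min hZ hpZ ((Finset.mem_filter.1 hz).1)) hdesc⟩

lemma descents_le_one (hJ : IsMaxTubing (cycleGraph n) J) (hm : tubingDown J m = Finset.univ)
    (huniq : ∃! K, FlipCover (cycleGraph n) K J) :
    (Finset.univ.filter (fun c : Fin n => ∃ p, TreeCovBy J c p ∧ p < c)).card ≤ 1 := by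
  by_contra h
  push_neg at h
  obtain ⟨c, hcmem, c', hcmem', hne⟩ := Finset.one_lt_card.1 h
  simp only [Finset.mem_filter, Finset.mem_univ, true_and] at hcmem hcmem'
  obtain ⟨p, hcov, hplt⟩ := hcmem
  obtain ⟨p', hcov', hplt'⟩ := hcmem'
  have hcm := cov_ne_m hJ hm hcov
  have hcm' := cov_ne_m hJ hm hcov'
  rw [cov_unique hJ hm hcov] at hplt
  rw [cov_unique hJ hm hcov'] at hplt'
  obtain ⟨X, hXnJ, hflip⟩ := flip_exists hJ hm hcm hplt
  obtain ⟨X', hXnJ', hflip'⟩ := flip_exists hJ hm hcm' hplt'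
  obtain ⟨K₀, _, huni⟩ := huniq
  have e1 := (huni _ hflip).trans (huni _ hflip').symm
  have hDne : tubingDown J c' ≠ tubingDown J c := fun e => hne (D_inj hJ hm e).symm
  have hmem1 : tubingDown J c' ∈ insert X (J.erase (tubingDown J c)) :=
    Finset.mem_insert_of_mem (Finset.mem_erase.2 ⟨hDne, D_memJ hJ hm hcm'⟩)
  rw [e1] at hmem1
  rcases Finset.mem_insert.1 hmem1 with he | he
  · exact hXnJ' (he ▸ D_memJ hJ hm hcm')
  · exact (Finset.mem_erase.1 he).1 rfl

end WithJ

end CT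

/-- The G-tree of a maximal tubing of the cycle has at least as many descents as right
edges, hence at least as many descents as branching points; consequently the G-tree of a
join irreducible element has at most one branching point. -/
theorem cycle_descents_ge_right_edges (n : ℕ) (J : Finset (Finset (Fin n))) (m : Fin n)
    (hJ : IsMaxTubing (cycleGraph n) J) (hm : tubingDown J m = Finset.univ) :
    (Finset.univ.filter (fun c : Fin n =>
        ∃ p, TreeCovBy J c p ∧ p ≠ m ∧ cycPos n m p < cycPos n m c)).card
      ≤ (Finset.univ.filter (fun c : Fin n => ∃ p, TreeCovBy J c p ∧ p < c)).card ∧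
    (Finset.univ.filter (fun p : Fin n =>
        ∃ c₁ c₂, c₁ ≠ c₂ ∧ TreeCovBy J c₁ p ∧ TreeCovBy J c₂ p)).card
      ≤ (Finset.univ.filter (fun c : Fin n => ∃ p, TreeCovBy J c p ∧ p < c)).card ∧
    ((∃! K, FlipCover (cycleGraph n) K J) →
      (Finset.univ.filter (fun p : Fin n =>
        ∃ c₁ c₂, c₁ ≠ c₂ ∧ TreeCovBy J c₁ p ∧ TreeCovBy J c₂ p)).card ≤ 1) := by
  refine ⟨CT.part1 hJ hm, (CT.part2 hJ hm).trans (CT.part1 hJ hm),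
    fun h => le_trans ((CT.part2 hJ hm).trans (CT.part1 hJ hm)) (CT.descents_le_one hJ hm h)⟩
end
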